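/- Let R = ℝ[t^{d₁},…,t^{d_r}] with gcd = 1, conductor 𝔠, Descartes numbers D_k, and let k ≥ 𝔠. If f ∈ R_{≤2k} is a nonnegative polynomial on ℝ with N distinct real zeros, then N ≤ k − ⌈(𝔠 − D_𝔠 − 1)/2⌉. -/

import Mathlib

open Polynomial

set_option maxHeartbeats 1000000

/-- The `k`-th Descartes number of a subalgebra `R ⊆ ℝ[t]`. -/
noncomputable def descartesNumber (R : Subalgebra ℝ ℝ[X]) (k : ℕ) : ℕ :=
  sSup {m : ℕ | ∃ f ∈ R, f ≠ 0 ∧ f.natDegree ≤ k ∧ f.roots.toFinset.card = m}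

namespace UBZN


/-- gap weight: 2 if even, 1 if odd -/
def wgap (n : ℕ) : ℕ := if Even n then 2 else 1

lemma wgap_pos (n : ℕ) : 1 ≤ wgap n := by unfold wgap; split <;> omega

lemma wgap_le_two (n : ℕ) : wgap n ≤ 2 := by unfold wgap; split <;> omega

lemma wgap_le {n : ℕ} (h : 1 ≤ n) : wgap n ≤ n := by
  unfold wgap; split
  · rename_i he; rcases he with ⟨m, hm⟩; omega
  · omega

/-- total gap weight of a (sorted) list of exponents -/
def Wl : List ℕ → ℕ
  | a :: b :: l => wgap (b - a) + Wl (b :: l)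
  | _ => 0

@[simp] lemma Wl_nil : Wl [] = 0 := rfl
@[simp] lemma Wl_single (a : ℕ) : Wl [a] = 0 := rfl
lemma Wl_cons (a b : ℕ) (l : List ℕ) : Wl (a :: b :: l) = wgap (b - a) + Wl (b :: l) := rfl

lemma Wl_cons' (a : ℕ) (L : List ℕ) (h : L ≠ []) :
    Wl (a :: L) = wgap (L.head h - a) + Wl L := by
  cases L with
  | nil => exact absurd rfl h
  | cons b t => rfl

lemma Wl_map_sub (l : List ℕ) (t : ℕ) (h : ∀ x ∈ l, t ≤ x) :
    Wl (l.map (· - t)) = Wl l := by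
  induction l with
  | nil => rfl
  | cons a l ih =>
    cases l with
    | nil => rfl
    | cons b m =>
      have ha : t ≤ a := h a (by simp)
      have hb : t ≤ b := h b (by simp)
      have : (b - t) - (a - t) = b - a := by omega
      simp only [List.map, Wl_cons, this]
      rw [show (b :: m).map (· - t) = (b - t) :: m.map (· - t) from rfl] at *
      have := ih (fun x hx => h x (List.mem_cons_of_mem _ hx))
      omega

lemma Wl_map_add (l : List ℕ) (t : ℕ) :
    Wl (l.map (· + t)) = Wl l := by
  induction l with
  | nil => rfl
  | cons a l ih =>
    cases l with
    | nil => rfl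
    | cons b m =>
      have : (b + t) - (a + t) = b - a := by omega
      simp only [List.map, Wl_cons, this] at *
      omega

lemma Wl_append (l₁ l₂ : List ℕ) (h₁ : l₁ ≠ []) (h₂ : l₂ ≠ []) :
    Wl (l₁ ++ l₂) = Wl l₁ + wgap (l₂.head h₂ - l₁.getLast h₁) + Wl l₂ := by
  induction l₁ with
  | nil => exact absurd rfl h₁
  | cons a m ih =>
    cases m with
    | nil =>
      simp only [List.singleton_append, Wl_single, List.getLast_singleton]
      rw [Wl_cons' a l₂ h₂]; omega
    | cons b t =>
      have hne : (b :: t) ++ l₂ ≠ [] := by simp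
      have : (a :: b :: t) ++ l₂ = a :: ((b :: t) ++ l₂) := rfl
      rw [this, Wl_cons' a _ hne]
      have hh : ((b :: t) ++ l₂).head hne = b := rfl
      rw [hh, ih (by simp)]
      simp only [List.getLast_cons (List.cons_ne_nil _ _)]
      rw [Wl_cons]
      omega

lemma Wl_le_span (l : List ℕ) (h : l ≠ []) (hs : l.Pairwise (· < ·)) :
    Wl l + l.head h ≤ l.getLast h := by
  induction l with
  | nil => exact absurd rfl h
  | cons a m ih =>
    cases m with
    | nil => simp
    | cons b t =>
      have hab : a < b := (List.pairwise_cons.1 hs).1 b (by simp)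
      have hs' : (b :: t).Pairwise (· < ·) := (List.pairwise_cons.1 hs).2
      have := ih (by simp) hs'
      rw [Wl_cons]
      have hg := wgap_le (show 1 ≤ b - a by omega)
      simp only [List.getLast_cons (List.cons_ne_nil _ _)]
      simp only [List.head_cons] at *
      omega

/-- sorted lists with the same members are equal -/
lemma sorted_eq_of_mem_iff : ∀ (l₁ l₂ : List ℕ), l₁.Pairwise (· < ·) → l₂.Pairwise (· < ·) →
    (∀ x, x ∈ l₁ ↔ x ∈ l₂) → l₁ = l₂
  | [], [], _, _, _ => rfl
  | [], b :: t, _, _, h => by have := (h b).2 (by simp); simp at this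
  | a :: s, [], _, _, h => by have := (h a).1 (by simp); simp at this
  | a :: s, b :: t, h₁, h₂, h => by
    obtain ⟨ha1, hs1⟩ := List.pairwise_cons.1 h₁
    obtain ⟨hb1, ht1⟩ := List.pairwise_cons.1 h₂
    have hab : a = b := by
      have h1 := (h a).1 (by simp)
      have h2 := (h b).2 (by simp)
      rcases List.mem_cons.1 h1 with h1 | h1
      · exact h1
      · rcases List.mem_cons.1 h2 with h2 | h2
        · omega
        · have := hb1 a h1; have := ha1 b h2; omega
    subst hab
    have : s = t := by
      apply sorted_eq_of_mem_iff s t hs1 ht1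
      intro x
      constructor
      · intro hx
        have hax : a < x := ha1 x hx
        rcases List.mem_cons.1 ((h x).1 (List.mem_cons_of_mem _ hx)) with h' | h'
        · omega
        · exact h'
      · intro hx
        have hax : a < x := hb1 x hx
        rcases List.mem_cons.1 ((h x).2 (List.mem_cons_of_mem _ hx)) with h' | h'
        · omega
        · exact h'
    rw [this]



/-- Between points where a polynomial takes opposite signs, there is a root of
odd multiplicity. -/
lemma exists_odd_root_aux : ∀ (n : ℕ) (h : ℝ[X]), h.natDegree ≤ n → ∀ u v : ℝ, u < v →
    h.eval u * h.eval v < 0 →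
    ∃ w ∈ Set.Ioo u v, h.eval w = 0 ∧ Odd (rootMultiplicity w h) := by
  intro n
  induction n with
  | zero =>
    intro h hdeg u v huv hs
    exfalso
    obtain ⟨a, rfl⟩ := Polynomial.natDegree_eq_zero.1 (Nat.le_zero.1 hdeg)
    simp only [eval_C] at hs
    nlinarith
  | succ n ih =>
    intro h hdeg u v huv hs
    have hu0 : h.eval u ≠ 0 := fun h0 => by rw [h0] at hs; simp at hs
    have hv0 : h.eval v ≠ 0 := fun h0 => by rw [h0] at hs; simp at hs
    have hne : h ≠ 0 := fun h0 => hu0 (by rw [h0]; simp)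
    have hcont : ContinuousOn (fun x => h.eval x) (Set.Icc u v) :=
      (h.continuous).continuousOn
    -- find a root in Ioo u v
    have : ∃ w ∈ Set.Ioo u v, h.eval w = 0 := by
      rcases lt_or_gt_of_ne hu0 with hun | hup
      · have hvp : 0 < h.eval v := by nlinarith
        have := intermediate_value_Ioo (le_of_lt huv) hcont
          (Set.mem_Ioo.2 ⟨hun, hvp⟩)
        obtain ⟨w, hw, hw0⟩ := this
        exact ⟨w, hw, hw0⟩
      · have hvn : h.eval v < 0 := by nlinarith
        have := intermediate_value_Ioo' (le_of_lt huv) hcont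
          (Set.mem_Ioo.2 ⟨hvn, hup⟩)
        obtain ⟨w, hw, hw0⟩ := this
        exact ⟨w, hw, hw0⟩
    obtain ⟨w, hw, hw0⟩ := this
    set m := rootMultiplicity w h with hm
    obtain ⟨q, hq, hqnd⟩ := h.exists_eq_pow_rootMultiplicity_mul_and_not_dvd hne w
    have hqw : q.eval w ≠ 0 := fun h0 => hqnd (dvd_iff_isRoot.2 h0)
    by_cases hmodd : Odd m
    · exact ⟨w, hw, hw0, hmodd⟩
    · -- m even, pass to q
      have hmeven : Even m := Nat.not_odd_iff_even.1 hmodd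
      have hmpos : 0 < m := (rootMultiplicity_pos hne).2 hw0
      have hq0 : q ≠ 0 := fun h0 => hne (by rw [hq, h0, mul_zero])
      have hXCw : ((X : ℝ[X]) - C w) ^ m ≠ 0 := pow_ne_zero _ (X_sub_C_ne_zero w)
      have hdegq : q.natDegree ≤ n := by
        have := Polynomial.natDegree_mul hXCw hq0
        rw [← hq] at this
        have hpow : (((X : ℝ[X]) - C w) ^ m).natDegree = m := by
          rw [Polynomial.natDegree_pow, Polynomial.natDegree_X_sub_C, mul_one]
        omega
      have hevu : h.eval u = (u - w) ^ m * q.eval u := by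
        rw [hq]; simp [eval_pow, hm]
      have hevv : h.eval v = (v - w) ^ m * q.eval v := by
        rw [hq]; simp [eval_pow, hm]
      have hupos : 0 < (u - w) ^ m := hmeven.pow_pos (sub_ne_zero.2 (ne_of_lt hw.1))
      have hvpos : 0 < (v - w) ^ m := hmeven.pow_pos (sub_ne_zero.2 (ne_of_gt hw.2))
      have hqs : q.eval u * q.eval v < 0 := by
        rw [hevu, hevv] at hs
        have heq : (u - w) ^ m * eval u q * ((v - w) ^ m * eval v q)
            = ((u - w) ^ m * (v - w) ^ m) * (eval u q * eval v q) := by ring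
        rw [heq] at hs
        by_contra hcon
        push_neg at hcon
        have := mul_nonneg (le_of_lt (mul_pos hupos hvpos)) hcon
        linarith
      obtain ⟨w', hw', hw'0, hw'odd⟩ := ih q hdegq u v huv hqs
      refine ⟨w', hw', ?_, ?_⟩
      · rw [hq]; simp [eval_pow, hw'0]
      · have hww' : w' ≠ w := fun h0 => hqw (h0 ▸ hw'0)
        have : rootMultiplicity w' h = rootMultiplicity w' (((X : ℝ[X]) - C w) ^ m) + rootMultiplicity w' q := by
          rw [hq]; exact rootMultiplicity_mul (by rw [← hq]; exact hne)
        have hz : rootMultiplicity w' (((X : ℝ[X]) - C w) ^ m) = 0 := by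
          apply rootMultiplicity_eq_zero
          simp only [IsRoot, eval_pow, eval_sub, eval_X, eval_C]
          intro h0
          have := pow_eq_zero_iff (n := m) (by omega) |>.1 h0
          have : w' = w := by linarith [sub_eq_zero.1 this]
          exact hww' this
        rw [this, hz, zero_add]
        exact hw'odd

lemma exists_odd_root (h : ℝ[X]) {u v : ℝ} (huv : u < v)
    (hs : h.eval u * h.eval v < 0) :
    ∃ w ∈ Set.Ioo u v, h.eval w = 0 ∧ Odd (rootMultiplicity w h) :=
  exists_odd_root_aux h.natDegree h le_rfl u v huv hs

/-- Between two roots of a nonzero polynomial there is an odd-multiplicity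
root of the derivative. -/
lemma exists_odd_root_deriv (h : ℝ[X]) (hne : h ≠ 0) {a b : ℝ} (hab : a < b)
    (ha : h.eval a = 0) (hb : h.eval b = 0) :
    ∃ w ∈ Set.Ioo a b, (derivative h).eval w = 0 ∧
      Odd (rootMultiplicity w (derivative h)) := by
  -- find a point in Ioo a b where h doesn't vanish
  have hfin : {x : ℝ | h.IsRoot x}.Finite := Polynomial.finite_setOf_isRoot hne
  have hIoo : (Set.Ioo a b).Infinite := Set.infinite_coe_iff.mp (Set.Ioo.infinite hab)
  obtain ⟨x₀, hx₀I, hx₀r⟩ := (hIoo.diff hfin).nonempty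
  have hx₀ : h.eval x₀ ≠ 0 := hx₀r
  obtain ⟨hax₀, hx₀b⟩ := hx₀I
  have hcont : ∀ s t : ℝ, ContinuousOn (fun x => h.eval x) (Set.Icc s t) :=
    fun s t => (h.continuous).continuousOn
  have hdiff : ∀ s t : ℝ, DifferentiableOn ℝ (fun x => h.eval x) (Set.Ioo s t) :=
    fun s t => (h.differentiable).differentiableOn
  obtain ⟨ξ₁, hξ₁, hd₁⟩ := exists_deriv_eq_slope (fun x => h.eval x) hax₀ (hcont a x₀) (hdiff a x₀)
  obtain ⟨ξ₂, hξ₂, hd₂⟩ := exists_deriv_eq_slope (fun x => h.eval x) hx₀b (hcont x₀ b) (hdiff x₀ b)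
  rw [Polynomial.deriv] at hd₁ hd₂
  rw [ha] at hd₁; rw [hb] at hd₂
  have hden₁ : (0:ℝ) < x₀ - a := by linarith [hξ₁.1, hξ₁.2]
  have hden₂ : (0:ℝ) < b - x₀ := by linarith [hξ₂.1, hξ₂.2]
  have hprod : (derivative h).eval ξ₁ * (derivative h).eval ξ₂ < 0 := by
    rw [hd₁, hd₂]
    rw [div_mul_div_comm]
    apply div_neg_of_neg_of_pos
    · nlinarith [mul_self_pos.2 hx₀]
    · nlinarith
  have hξ₁₂ : ξ₁ < ξ₂ := lt_trans hξ₁.2 hξ₂.1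
  obtain ⟨w, hw, hw0, hwodd⟩ := exists_odd_root (derivative h) hξ₁₂ hprod
  exact ⟨w, ⟨lt_trans hξ₁.1 hw.1, lt_trans hw.2 hξ₂.2⟩, hw0, hwodd⟩

/-- Given a sorted list of roots of `h`, produce odd-multiplicity roots of the
derivative strictly interleaved between them. -/
lemma interleave_roots (h : ℝ[X]) (hne : h ≠ 0) :
    ∀ (L : List ℝ), L.Pairwise (· < ·) → (∀ x ∈ L, h.eval x = 0) →
    ∃ M : List ℝ, L.length ≤ M.length + 1 ∧ M.Pairwise (· < ·) ∧
      (∀ y ∈ M, (derivative h).eval y = 0 ∧ Odd (rootMultiplicity y (derivative h))) ∧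
      (∀ y ∈ M, ∀ x ∈ L, y ≠ x) ∧
      (∀ y ∈ M, ∃ p ∈ L, ∃ q ∈ L, p < y ∧ y < q) := by
  intro L
  induction L with
  | nil => intro _ _; exact ⟨[], by simp, by simp, by simp, by simp, by simp⟩
  | cons a t ih =>
    intro hsort hroots
    cases t with
    | nil => exact ⟨[], by simp, by simp, by simp, by simp, by simp⟩
    | cons b s =>
      obtain ⟨hab, hrest⟩ := List.pairwise_cons.1 hsort
      have hab' : a < b := hab b (by simp)
      obtain ⟨M', hlen, hsortM, hoddM, hneM, hbetM⟩ :=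
        ih hrest (fun x hx => hroots x (List.mem_cons_of_mem _ hx))
      obtain ⟨w, hw, hw0, hwodd⟩ := exists_odd_root_deriv h hne hab'
        (hroots a (by simp)) (hroots b (by simp [List.mem_cons]))
      have hwb : w < b := hw.2
      have hwltM : ∀ y ∈ M', w < y := by
        intro y hy
        obtain ⟨p, hp, q, hq, hpy, hyq⟩ := hbetM y hy
        have hbp : b ≤ p := by
          rcases List.mem_cons.1 hp with rfl | hp'
          · exact le_refl _
          · exact le_of_lt ((List.pairwise_cons.1 hrest).1 p hp')
        linarith
      refine ⟨w :: M', by simpa using hlen, ?_, ?_, ?_, ?_⟩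
      · exact List.pairwise_cons.2 ⟨hwltM, hsortM⟩
      · intro y hy
        rcases List.mem_cons.1 hy with rfl | hy'
        · exact ⟨hw0, hwodd⟩
        · exact hoddM y hy'
      · intro y hy x hx
        rcases List.mem_cons.1 hy with rfl | hy'
        · -- y = w
          rcases List.mem_cons.1 hx with rfl | hx'
          · exact ne_of_gt hw.1
          · rcases List.mem_cons.1 hx' with rfl | hx''
            · exact ne_of_lt hw.2
            · have : b < x := (List.pairwise_cons.1 hrest).1 x hx''
              intro h0; rw [h0] at hwb; linarith
        · rcases List.mem_cons.1 hx with rfl | hx'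
          · obtain ⟨p, hp, q, hq, hpy, hyq⟩ := hbetM y hy'
            have hxp : x < p := hab p hp
            intro h0
            rw [h0] at hpy
            linarith
          · exact hneM y hy' x hx'
      · intro y hy
        rcases List.mem_cons.1 hy with rfl | hy'
        · exact ⟨a, by simp, b, by simp [List.mem_cons], hw.1, hw.2⟩
        · obtain ⟨p, hp, q, hq, hpy, hyq⟩ := hbetM y hy'
          exact ⟨p, List.mem_cons_of_mem _ hp, q, List.mem_cons_of_mem _ hq, hpy, hyq⟩



lemma sorted_le_getLast (L : List ℕ) (h : L ≠ []) (hs : L.Pairwise (· < ·)) :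
    ∀ x ∈ L, x ≤ L.getLast h := by
  induction L with
  | nil => exact absurd rfl h
  | cons a t ih =>
    intro x hx
    obtain ⟨ha, ht⟩ := List.pairwise_cons.1 hs
    cases t with
    | nil => simp at hx; simp [hx]
    | cons b s =>
      rw [List.getLast_cons (List.cons_ne_nil _ _)]
      rcases List.mem_cons.1 hx with rfl | hx'
      · have hbl : b ≤ (b :: s).getLast (List.cons_ne_nil _ _) :=
          ih (List.cons_ne_nil _ _) ht b (by simp)
        have : x < b := ha b (by simp)
        omega
      · exact ih (List.cons_ne_nil _ _) ht x hx'

lemma sorted_head_le (L : List ℕ) (h : L ≠ []) (hs : L.Pairwise (· < ·)) :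
    ∀ x ∈ L, L.head h ≤ x := by
  cases L with
  | nil => exact absurd rfl h
  | cons a t =>
    intro x hx
    rcases List.mem_cons.1 hx with rfl | hx'
    · simp
    · exact le_of_lt ((List.pairwise_cons.1 hs).1 x hx')

lemma sorted_head_eq (L : List ℕ) (h : L ≠ []) (hs : L.Pairwise (· < ·)) (a : ℕ)
    (ha : a ∈ L) (hmin : ∀ b ∈ L, a ≤ b) : L.head h = a := by
  have h1 := sorted_head_le L h hs a ha
  have h2 := hmin (L.head h) (List.head_mem h)
  omega

lemma sorted_getLast_eq (L : List ℕ) (h : L ≠ []) (hs : L.Pairwise (· < ·)) (a : ℕ)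
    (ha : a ∈ L) (hmax : ∀ b ∈ L, b ≤ a) : L.getLast h = a := by
  have h1 := sorted_le_getLast L h hs a ha
  have h2 := hmax (L.getLast h) (List.getLast_mem h)
  omega

/-- the sorted list of exponents of a polynomial -/
noncomputable def SL (g : ℝ[X]) : List ℕ := g.support.sort (· ≤ ·)

lemma mem_SL {g : ℝ[X]} {m : ℕ} : m ∈ SL g ↔ m ∈ g.support := Finset.mem_sort _

lemma SL_sorted (g : ℝ[X]) : (SL g).Pairwise (· < ·) := (Finset.sortedLT_sort _).pairwise

lemma SL_ne_nil {g : ℝ[X]} (h : g ≠ 0) : SL g ≠ [] := by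
  intro h0
  have : g.natDegree ∈ SL g := mem_SL.2 (natDegree_mem_support_of_nonzero h)
  rw [h0] at this; simp at this

lemma SL_head {g : ℝ[X]} (h : g ≠ 0) : (SL g).head (SL_ne_nil h) = g.natTrailingDegree :=
  sorted_head_eq _ _ (SL_sorted g) _ (mem_SL.2 (natTrailingDegree_mem_support_of_nonzero h))
    (fun b hb => natTrailingDegree_le_of_mem_supp b (mem_SL.1 hb))

lemma SL_getLast {g : ℝ[X]} (h : g ≠ 0) : (SL g).getLast (SL_ne_nil h) = g.natDegree :=
  sorted_getLast_eq _ _ (SL_sorted g) _ (mem_SL.2 (natDegree_mem_support_of_nonzero h))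
    (fun b hb => le_natDegree_of_mem_supp b (mem_SL.1 hb))

lemma SL_head? {g : ℝ[X]} (h : g ≠ 0) : (SL g).head? = some g.natTrailingDegree := by
  rw [← SL_head h]
  exact List.head?_eq_head _

lemma SL_getLast? {g : ℝ[X]} (h : g ≠ 0) : (SL g).getLast? = some g.natDegree := by
  rw [← SL_getLast h]
  exact (List.getLast?_eq_getLast _)

/-- the sorted support of the derivative -/
lemma SL_derivative (g : ℝ[X]) :
    SL (derivative g) = ((SL g).filter (fun x => x ≠ 0)).map (· - 1) := by
  apply sorted_eq_of_mem_iff _ _ (SL_sorted _)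
  · -- sortedness of RHS
    have h1 : ((SL g).filter (fun x => x ≠ 0)).Pairwise (· < ·) :=
      (SL_sorted g).sublist (List.filter_sublist)
    rw [List.pairwise_map]
    apply h1.imp_of_mem
    intro a b ha hb hab
    have ha' : a ≠ 0 := by
      have := List.of_mem_filter ha; simpa using this
    show a - 1 < b - 1
    omega
  · intro x
    rw [mem_SL, List.mem_map]
    constructor
    · intro hx
      refine ⟨x + 1, ?_, by omega⟩
      rw [List.mem_filter]
      constructor
      · exact mem_SL.2 ((Polynomial.mem_support_derivative (p := g) (n := x)).1 hx)
      · simp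
    · rintro ⟨y, hy, rfl⟩
      rw [List.mem_filter] at hy
      have hy0 : y ≠ 0 := by simpa using hy.2
      apply (Polynomial.mem_support_derivative (p := g) (n := y-1)).2
      have hyy : y - 1 + 1 = y := by omega
      rw [hyy]
      exact mem_SL.1 hy.1

/-- sorted support of `X^n * G` -/
lemma SL_X_pow_mul (G : ℝ[X]) (n : ℕ) :
    SL (X ^ n * G) = (SL G).map (· + n) := by
  apply sorted_eq_of_mem_iff _ _ (SL_sorted _)
  · rw [List.pairwise_map]
    apply (SL_sorted G).imp_of_mem
    intro a b _ _ hab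
    simpa using (by omega : a + n < b + n)
  · intro x
    rw [mem_SL, List.mem_map, mem_support_iff, mul_comm]
    rw [Polynomial.coeff_mul_X_pow']
    constructor
    · intro hx
      split at hx
      · exact ⟨x - n, mem_SL.2 (mem_support_iff.2 hx), by omega⟩
      · simp at hx
    · rintro ⟨y, hy, rfl⟩
      rw [if_pos (by omega : n ≤ y + n)]
      have : y + n - n = y := by omega
      rw [this]
      exact mem_support_iff.1 (mem_SL.1 hy)

/-- root multiplicity at `0` equals the trailing degree -/
lemma rootMultiplicity_zero_eq (g : ℝ[X]) (h : g ≠ 0) :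
    rootMultiplicity 0 g = g.natTrailingDegree := by
  have key : ∀ n : ℕ, ((X : ℝ[X]) - C 0) ^ n ∣ g ↔ n ≤ g.natTrailingDegree := by
    intro n
    rw [C_0, sub_zero, Polynomial.X_pow_dvd_iff]
    constructor
    · intro hd
      by_contra hcon
      push_neg at hcon
      have := hd g.natTrailingDegree hcon
      exact (mem_support_iff.1 (natTrailingDegree_mem_support_of_nonzero h)) this
    · intro hn d hd
      exact coeff_eq_zero_of_lt_natTrailingDegree (by omega)
  have h1 : ((X : ℝ[X]) - C 0) ^ (rootMultiplicity 0 g) ∣ g := pow_rootMultiplicity_dvd g 0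
  have h2 := (key _).1 h1
  have h3 : ((X : ℝ[X]) - C 0) ^ (g.natTrailingDegree) ∣ g := (key _).2 le_rfl
  have h4 : g.natTrailingDegree ≤ rootMultiplicity 0 g := by
    by_contra hcon
    push_neg at hcon
    have := (Polynomial.pow_rootMultiplicity_not_dvd h 0)
    have hdvd : ((X : ℝ[X]) - C 0) ^ (rootMultiplicity 0 g + 1) ∣ g := by
      exact dvd_trans (pow_dvd_pow _ (by omega)) h3
    exact this hdvd
  omega



/-- number of distinct nonzero real roots -/
noncomputable def Mnz (g : ℝ[X]) : ℕ := (g.roots.toFinset.filter (fun x => x ≠ 0)).card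

lemma lemmaB : ∀ (n : ℕ) (g : ℝ[X]), g ≠ 0 → g.natDegree ≤ n → Mnz g ≤ Wl (SL g) := by
  intro n
  induction n with
  | zero =>
    intro g hg hdeg
    obtain ⟨a, rfl⟩ := Polynomial.natDegree_eq_zero.1 (Nat.le_zero.1 hdeg)
    simp [Mnz, roots_C]
  | succ n ih =>
    intro g hg hdeg
    set e := g.natTrailingDegree with he
    have hdvd : (X : ℝ[X])^e ∣ g := X_pow_dvd_iff.2
      (fun d hd => coeff_eq_zero_of_lt_natTrailingDegree hd)
    obtain ⟨G, hgG⟩ := hdvd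
    have hG0 : G ≠ 0 := by rintro rfl; rw [mul_zero] at hgG; exact hg hgG
    have hXe : ((X : ℝ[X])^e) ≠ 0 := pow_ne_zero _ X_ne_zero
    have hXet : ((X : ℝ[X])^e).natTrailingDegree = e := by
      simp [Polynomial.natTrailingDegree_X_pow]
    have htG : G.natTrailingDegree = 0 := by
      have h1 := Polynomial.natTrailingDegree_mul (p := (X : ℝ[X])^e) (q := G) hXe hG0
      rw [← hgG, hXet] at h1
      omega
    have hGc : G.coeff 0 ≠ 0 := by
      rcases Polynomial.natTrailingDegree_eq_zero.1 htG with h | h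
      · exact absurd h hG0
      · exact h
    have hGe : G.eval 0 ≠ 0 := by rwa [← coeff_zero_eq_eval_zero]
    have hMnz : Mnz g = G.roots.toFinset.card := by
      unfold Mnz
      congr 1
      ext x
      simp only [Finset.mem_filter, Multiset.mem_toFinset]
      rw [mem_roots', mem_roots']
      constructor
      · rintro ⟨⟨_, h2⟩, hx0⟩
        refine ⟨hG0, ?_⟩
        have hev : g.eval x = x^e * G.eval x := by rw [hgG]; simp
        rw [IsRoot] at h2 ⊢
        rw [hev] at h2
        rcases mul_eq_zero.1 h2 with h3 | h3
        · exact absurd h3 (pow_ne_zero _ hx0)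
        · exact h3
      · rintro ⟨_, h2⟩
        have hx0 : x ≠ 0 := by rintro rfl; exact hGe h2
        refine ⟨⟨hg, ?_⟩, hx0⟩
        rw [IsRoot] at h2 ⊢
        rw [hgG]
        simp [h2]
    have hWeq : Wl (SL g) = Wl (SL G) := by rw [hgG, SL_X_pow_mul, Wl_map_add]
    rw [hMnz, hWeq]
    by_cases hr : G.roots.toFinset.card = 0
    · omega
    -- G is nonconstant
    have hndG : 1 ≤ G.natDegree := by
      by_contra hcon
      push_neg at hcon
      obtain ⟨a, ha⟩ := Polynomial.natDegree_eq_zero.1 (show G.natDegree = 0 by omega)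
      rw [← ha] at hr
      simp [roots_C] at hr
    have hG'0 : derivative G ≠ 0 := by
      intro h0
      have := Polynomial.natDegree_eq_zero_of_derivative_eq_zero h0
      omega
    -- structure of SL G
    have hSLG_ne : SL G ≠ [] := SL_ne_nil hG0
    have hhead : (SL G).head? = some 0 := by rw [SL_head? hG0, htG]
    have hlast : (SL G).getLast? = some G.natDegree := SL_getLast? hG0
    have hsortG := SL_sorted G
    rcases hSL : SL G with _ | ⟨a, t⟩
    · exact absurd hSL hSLG_ne
    rw [hSL] at hhead hlast
    have ha0 : a = 0 := by simpa using hhead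
    rcases t with _ | ⟨b, s⟩
    · exfalso
      simp [ha0] at hlast
      omega
    subst ha0
    rw [hSL] at hsortG
    obtain ⟨h0lt, hsortbs⟩ := List.pairwise_cons.1 hsortG
    have hb1 : 1 ≤ b := h0lt b (by simp)
    have hbs_pos : ∀ x ∈ b :: s, 1 ≤ x := fun x hx => h0lt x hx
    -- SL (derivative G)
    have hSLd : SL (derivative G) = (b :: s).map (· - 1) := by
      rw [SL_derivative, hSL]
      congr 1
      rw [List.filter_cons_of_neg (by simp)]
      rw [List.filter_eq_self.2]
      intro x hx
      simp only [ne_eq, decide_not]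
      have := hbs_pos x hx
      simp
      omega
    have hSLd_ne : SL (derivative G) ≠ [] := SL_ne_nil hG'0
    have htd : (derivative G).natTrailingDegree = b - 1 := by
      have h1 := SL_head? hG'0
      rw [hSLd] at h1
      simp at h1
      omega
    have hWd : Wl (SL (derivative G)) = Wl (b :: s) := by
      rw [hSLd, Wl_map_sub _ _ hbs_pos]
    -- the sorted list of roots of G
    set L : List ℝ := G.roots.toFinset.sort (· ≤ ·) with hL
    have hLlen : L.length = G.roots.toFinset.card := Finset.length_sort _
    have hLsort : L.Pairwise (· < ·) := (Finset.sortedLT_sort _).pairwise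
    have hLroots : ∀ x ∈ L, G.eval x = 0 := by
      intro x hx
      have : x ∈ G.roots.toFinset := (Finset.mem_sort _).1 hx
      exact (mem_roots'.1 (Multiset.mem_toFinset.1 this)).2
    obtain ⟨M, hlen, hsortM, hoddM, _, _⟩ := interleave_roots G hG0 L hLsort hLroots
    have hMnodup : M.Nodup := hsortM.imp (fun h => ne_of_lt h)
    have hMcard : M.toFinset.card = M.length := List.toFinset_card_of_nodup hMnodup
    have hsub : M.toFinset.filter (fun x => x ≠ 0) ⊆
        (derivative G).roots.toFinset.filter (fun x => x ≠ 0) := by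
      intro x hx
      rw [Finset.mem_filter] at hx ⊢
      refine ⟨Multiset.mem_toFinset.2 (mem_roots'.2 ⟨hG'0, ?_⟩), hx.2⟩
      exact (hoddM x (List.mem_toFinset.1 hx.1)).1
    have h1 : (M.toFinset.filter (fun x => x ≠ 0)).card ≤ Mnz (derivative G) :=
      Finset.card_le_card hsub
    have hIH : Mnz (derivative G) ≤ Wl (b :: s) := by
      rw [← hWd]
      apply ih _ hG'0
      have hd1 : (derivative G).natDegree < G.natDegree :=
        Polynomial.natDegree_derivative_lt (by omega)
      have hd2 : g.natDegree = e + G.natDegree := by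
        rw [hgG, Polynomial.natDegree_mul hXe hG0, Polynomial.natDegree_X_pow]
      omega
    by_cases h0M : (0 : ℝ) ∈ M
    · -- 0 is among the interleaved points: b must be even
      have hodd0 : Odd (rootMultiplicity 0 (derivative G)) := (hoddM 0 h0M).2
      rw [rootMultiplicity_zero_eq _ hG'0, htd] at hodd0
      have hbeven : Even b := by
        rcases hodd0 with ⟨m, hm⟩
        exact ⟨m + 1, by omega⟩
      have hwb : wgap b = 2 := by unfold wgap; rw [if_pos hbeven]
      have hfe : M.toFinset.filter (fun x => x ≠ 0) = M.toFinset.erase 0 := Finset.filter_ne' _ _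
      have h0f : (0 : ℝ) ∈ M.toFinset := List.mem_toFinset.2 h0M
      have hce : (M.toFinset.erase 0).card = M.toFinset.card - 1 := Finset.card_erase_of_mem h0f
      have hM1 : 1 ≤ M.toFinset.card := Finset.card_pos.2 ⟨0, h0f⟩
      rw [hfe, hce] at h1
      rw [Wl_cons, Nat.sub_zero, hwb]
      omega
    · have hfe : M.toFinset.filter (fun x => x ≠ 0) = M.toFinset := by
        apply Finset.filter_true_of_mem
        intro x hx
        intro h0
        rw [h0] at hx
        exact h0M (List.mem_toFinset.1 hx)
      rw [hfe] at h1
      have := wgap_pos b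
      rw [Wl_cons, Nat.sub_zero]
      omega



lemma main_count (f : ℝ[X]) (hf : f ≠ 0) (hpos : ∀ x : ℝ, 0 ≤ f.eval x) :
    2 * f.roots.toFinset.card ≤ (if f.eval 0 = 0 then 2 else 0) + Wl (SL f) := by
  set N := f.roots.toFinset.card with hN
  by_cases hN0 : N = 0
  · rw [hN0]; split <;> omega
  have hrootsmin : ∀ x ∈ f.roots.toFinset, (derivative f).eval x = 0 := by
    intro x hx
    have hx0 : f.eval x = 0 := (mem_roots'.1 (Multiset.mem_toFinset.1 hx)).2
    have hlm : IsLocalMin (fun y => f.eval y) x :=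
      Filter.Eventually.of_forall (fun y => by simpa [hx0] using hpos y)
    have := hlm.deriv_eq_zero
    rwa [Polynomial.deriv] at this
  have hndf : 1 ≤ f.natDegree := by
    by_contra hcon
    push_neg at hcon
    obtain ⟨a, ha⟩ := Polynomial.natDegree_eq_zero.1 (show f.natDegree = 0 by omega)
    obtain ⟨x, hx⟩ := Finset.card_pos.1 (show 0 < N by omega)
    have hx0 : f.eval x = 0 := (mem_roots'.1 (Multiset.mem_toFinset.1 hx)).2
    rw [← ha] at hx0
    simp at hx0
    rw [← ha, hx0] at hf
    simp at hf
  have hf'0 : derivative f ≠ 0 := by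
    intro h0
    have := Polynomial.natDegree_eq_zero_of_derivative_eq_zero h0
    omega
  set L : List ℝ := f.roots.toFinset.sort (· ≤ ·) with hLdef
  have hLlen : L.length = N := Finset.length_sort _
  have hLsort : L.Pairwise (· < ·) := (Finset.sortedLT_sort _).pairwise
  have hLmem : ∀ x, x ∈ L ↔ x ∈ f.roots.toFinset := fun x => Finset.mem_sort _
  obtain ⟨M, hlen, hsortM, hoddM, hneM, hbetM⟩ := interleave_roots f hf L hLsort
    (fun x hx => (mem_roots'.1 (Multiset.mem_toFinset.1 ((hLmem x).1 hx))).2)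
  have hMnodup : M.Nodup := hsortM.imp (fun h => ne_of_lt h)
  have hMcard : M.toFinset.card = M.length := List.toFinset_card_of_nodup hMnodup
  set A := f.roots.toFinset.filter (fun x => x ≠ 0) with hAdef
  set B := M.toFinset.filter (fun x => x ≠ 0) with hBdef
  have hdisj : Disjoint A B := by
    rw [Finset.disjoint_left]
    intro x hxA hxB
    have h1 : x ∈ f.roots.toFinset := (Finset.mem_filter.1 hxA).1
    have h2 : x ∈ M := List.mem_toFinset.1 (Finset.mem_filter.1 hxB).1
    exact hneM x h2 x ((hLmem x).2 h1) rfl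
  have hsubAB : A ∪ B ⊆ (derivative f).roots.toFinset.filter (fun x => x ≠ 0) := by
    intro x hx
    rcases Finset.mem_union.1 hx with hx | hx
    · rw [Finset.mem_filter] at hx ⊢
      exact ⟨Multiset.mem_toFinset.2 (mem_roots'.2 ⟨hf'0, hrootsmin x hx.1⟩), hx.2⟩
    · rw [Finset.mem_filter] at hx ⊢
      exact ⟨Multiset.mem_toFinset.2
        (mem_roots'.2 ⟨hf'0, (hoddM x (List.mem_toFinset.1 hx.1)).1⟩), hx.2⟩
  have hMnzf' : A.card + B.card ≤ Mnz (derivative f) := by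
    rw [← Finset.card_union_of_disjoint hdisj]
    exact Finset.card_le_card hsubAB
  have hlemB : Mnz (derivative f) ≤ Wl (SL (derivative f)) := lemmaB _ _ hf'0 le_rfl
  by_cases hz : f.eval 0 = 0
  · -- 0 is a root of f
    have h0Φ : (0:ℝ) ∈ f.roots.toFinset := Multiset.mem_toFinset.2 (mem_roots'.2 ⟨hf, hz⟩)
    have hA : A.card = N - 1 := by
      rw [hAdef, Finset.filter_ne' _ _, Finset.card_erase_of_mem h0Φ]
    have h0M : (0:ℝ) ∉ M := fun h0 => hneM 0 h0 0 ((hLmem 0).2 h0Φ) rfl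
    have hB : B.card = M.length := by
      rw [hBdef, Finset.filter_true_of_mem, hMcard]
      intro x hx h0
      rw [h0] at hx
      exact h0M (List.mem_toFinset.1 hx)
    have hpos1 : ∀ x ∈ SL f, 1 ≤ x := by
      intro x hx
      have hxs : x ∈ f.support := mem_SL.1 hx
      rcases Nat.eq_zero_or_pos x with rfl | h
      · exfalso
        have := mem_support_iff.1 hxs
        rw [coeff_zero_eq_eval_zero] at this
        exact this hz
      · omega
    have hfilter : (SL f).filter (fun x => x ≠ 0) = SL f := by
      apply List.filter_eq_self.2
      intro x hx
      have := hpos1 x hx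
      simp
      omega
    have hWd : Wl (SL (derivative f)) = Wl (SL f) := by
      rw [SL_derivative, hfilter, Wl_map_sub _ _ hpos1]
    rw [if_pos hz]
    omega
  · -- 0 is not a root of f
    have h0Φ : (0:ℝ) ∉ f.roots.toFinset := by
      intro h0
      exact hz (mem_roots'.1 (Multiset.mem_toFinset.1 h0)).2
    have hA : A.card = N := by
      rw [hAdef, Finset.filter_true_of_mem]
      intro x hx h0
      rw [h0] at hx
      exact h0Φ hx
    have h0supp : f.natTrailingDegree = 0 :=
      Polynomial.natTrailingDegree_eq_zero.2 (Or.inr (by rwa [coeff_zero_eq_eval_zero]))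
    have hhead : (SL f).head? = some 0 := by rw [SL_head? hf, h0supp]
    have hlast : (SL f).getLast? = some f.natDegree := SL_getLast? hf
    have hsortf := SL_sorted f
    rcases hSL : SL f with _ | ⟨a, t⟩
    · exact absurd hSL (SL_ne_nil hf)
    rw [hSL] at hhead hlast hsortf
    have ha0 : a = 0 := by simpa using hhead
    rcases t with _ | ⟨b, s⟩
    · exfalso
      simp [ha0] at hlast
      omega
    subst ha0
    obtain ⟨h0lt, hsortbs⟩ := List.pairwise_cons.1 hsortf
    have hb1 : 1 ≤ b := h0lt b (by simp)
    have hbs_pos : ∀ x ∈ b :: s, 1 ≤ x := fun x hx => h0lt x hx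
    have hSLd : SL (derivative f) = (b :: s).map (· - 1) := by
      rw [SL_derivative, hSL]
      congr 1
      rw [List.filter_cons_of_neg (by simp)]
      rw [List.filter_eq_self.2]
      intro x hx
      have := hbs_pos x hx
      simp
      omega
    have htd : (derivative f).natTrailingDegree = b - 1 := by
      have h1 := SL_head? hf'0
      rw [hSLd] at h1
      simp at h1
      omega
    have hWd : Wl (SL (derivative f)) = Wl (b :: s) := by
      rw [hSLd, Wl_map_sub _ _ hbs_pos]
    rw [if_neg hz, Wl_cons, Nat.sub_zero]
    by_cases h0M : (0:ℝ) ∈ M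
    · have hodd0 : Odd (rootMultiplicity 0 (derivative f)) := (hoddM 0 h0M).2
      rw [rootMultiplicity_zero_eq _ hf'0, htd] at hodd0
      have hbeven : Even b := by
        rcases hodd0 with ⟨m, hm⟩
        exact ⟨m + 1, by omega⟩
      have hwb : wgap b = 2 := by unfold wgap; rw [if_pos hbeven]
      have hfe : B = M.toFinset.erase 0 := Finset.filter_ne' _ _
      have h0f : (0:ℝ) ∈ M.toFinset := List.mem_toFinset.2 h0M
      have hce : B.card = M.toFinset.card - 1 := by rw [hfe, Finset.card_erase_of_mem h0f]
      have hM1 : 1 ≤ M.toFinset.card := Finset.card_pos.2 ⟨0, h0f⟩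
      rw [hwb]
      omega
    · have hB : B.card = M.length := by
        rw [hBdef, Finset.filter_true_of_mem, hMcard]
        intro x hx h0
        rw [h0] at hx
        exact h0M (List.mem_toFinset.1 hx)
      have := wgap_pos b
      omega



noncomputable def altCount (Q : ℝ[X]) : List ℝ → ℕ
  | x :: y :: l => (if Q.eval x * Q.eval y < 0 then 1 else 0) + altCount Q (y :: l)
  | _ => 0

@[simp] lemma altCount_nil (Q : ℝ[X]) : altCount Q [] = 0 := rfl
@[simp] lemma altCount_single (Q : ℝ[X]) (x : ℝ) : altCount Q [x] = 0 := rfl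
lemma altCount_cons₂ (Q : ℝ[X]) (x y : ℝ) (l : List ℝ) :
    altCount Q (x :: y :: l) =
      (if Q.eval x * Q.eval y < 0 then 1 else 0) + altCount Q (y :: l) := rfl

lemma altCount_cons' (Q : ℝ[X]) (x : ℝ) (L : List ℝ) (h : L ≠ []) :
    altCount Q (x :: L) =
      (if Q.eval x * Q.eval (L.head h) < 0 then 1 else 0) + altCount Q L := by
  cases L with
  | nil => exact absurd rfl h
  | cons b t => rfl

lemma altCount_append (Q : ℝ[X]) (l₁ l₂ : List ℝ) (h₁ : l₁ ≠ []) (h₂ : l₂ ≠ []) :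
    altCount Q (l₁ ++ l₂) = altCount Q l₁ +
      (if Q.eval (l₁.getLast h₁) * Q.eval (l₂.head h₂) < 0 then 1 else 0) + altCount Q l₂ := by
  induction l₁ with
  | nil => exact absurd rfl h₁
  | cons a m ih =>
    cases m with
    | nil =>
      simp only [List.singleton_append, altCount_single, List.getLast_singleton]
      rw [altCount_cons' Q a l₂ h₂]
      by_cases hc : Q.eval a * Q.eval (l₂.head h₂) < 0 <;> simp [hc]
    | cons b t =>
      have hne : (b :: t) ++ l₂ ≠ [] := by simp
      have heq : (a :: b :: t) ++ l₂ = a :: ((b :: t) ++ l₂) := rfl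
      rw [heq, altCount_cons' Q a _ hne]
      have hh : ((b :: t) ++ l₂).head hne = b := rfl
      rw [hh, ih (by simp)]
      simp only [List.getLast_cons (List.cons_ne_nil _ _)]
      rw [altCount_cons₂]
      omega

lemma altCount_congr (Q P : ℝ[X]) : ∀ (l : List ℝ),
    (∀ x ∈ l, ∀ y ∈ l, (Q.eval x * Q.eval y < 0 ↔ P.eval x * P.eval y < 0)) →
    altCount Q l = altCount P l := by
  intro l
  induction l with
  | nil => intro _; rfl
  | cons a m ih =>
    intro h
    cases m with
    | nil => rfl
    | cons b t =>
      rw [altCount_cons₂, altCount_cons₂]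
      rw [ih (fun x hx y hy => h x (List.mem_cons_of_mem _ hx) y (List.mem_cons_of_mem _ hy))]
      have := h a (by simp) b (by simp [List.mem_cons])
      split <;> split <;> first | rfl | tauto

lemma alt_le_roots (Q : ℝ[X]) : ∀ (L : List ℝ), L.Pairwise (· < ·) →
    altCount Q L ≤ (Q.roots.toFinset.filter
      (fun r => (∃ p ∈ L, p < r) ∧ (∃ q ∈ L, r < q))).card := by
  intro L
  induction L with
  | nil => intro _; simp
  | cons x m ih =>
    intro hsort
    cases m with
    | nil => simp
    | cons y u =>
      have hsort' : (y :: u).Pairwise (· < ·) := (List.pairwise_cons.1 hsort).2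
      have hxy : x < y := (List.pairwise_cons.1 hsort).1 y (by simp)
      have hIH := ih hsort'
      have hsub : Q.roots.toFinset.filter
            (fun r => (∃ p ∈ y :: u, p < r) ∧ (∃ q ∈ y :: u, r < q)) ⊆
          Q.roots.toFinset.filter
            (fun r => (∃ p ∈ x :: y :: u, p < r) ∧ (∃ q ∈ x :: y :: u, r < q)) := by
        intro z hz
        rw [Finset.mem_filter] at hz ⊢
        obtain ⟨h1, ⟨p, hp, hpz⟩, ⟨q, hq, hzq⟩⟩ := hz
        exact ⟨h1, ⟨p, List.mem_cons_of_mem _ hp, hpz⟩, ⟨q, List.mem_cons_of_mem _ hq, hzq⟩⟩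
      by_cases hprod : Q.eval x * Q.eval y < 0
      · obtain ⟨ρ, hρ, hρ0, _⟩ := exists_odd_root Q hxy hprod
        have hQ0 : Q ≠ 0 := by
          intro h0
          rw [h0] at hprod
          simp at hprod
        have hρS : ρ ∈ Q.roots.toFinset.filter
            (fun r => (∃ p ∈ x :: y :: u, p < r) ∧ (∃ q ∈ x :: y :: u, r < q)) := by
          rw [Finset.mem_filter]
          exact ⟨Multiset.mem_toFinset.2 (mem_roots'.2 ⟨hQ0, hρ0⟩),
            ⟨x, by simp, hρ.1⟩, ⟨y, by simp [List.mem_cons], hρ.2⟩⟩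
        have hρnot : ρ ∉ Q.roots.toFinset.filter
            (fun r => (∃ p ∈ y :: u, p < r) ∧ (∃ q ∈ y :: u, r < q)) := by
          intro hmem
          rw [Finset.mem_filter] at hmem
          obtain ⟨_, ⟨p, hp, hpρ⟩, _⟩ := hmem
          have hyp : y ≤ p := by
            rcases List.mem_cons.1 hp with rfl | hp'
            · exact le_refl _
            · exact le_of_lt ((List.pairwise_cons.1 hsort').1 p hp')
          have : ρ < y := hρ.2
          linarith
        rw [altCount_cons₂, if_pos hprod]
        calc 1 + altCount Q (y :: u)
            ≤ 1 + (Q.roots.toFinset.filter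
              (fun r => (∃ p ∈ y :: u, p < r) ∧ (∃ q ∈ y :: u, r < q))).card := by omega
          _ = (insert ρ (Q.roots.toFinset.filter
              (fun r => (∃ p ∈ y :: u, p < r) ∧ (∃ q ∈ y :: u, r < q)))).card := by
              rw [Finset.card_insert_of_notMem hρnot]
              omega
          _ ≤ _ := Finset.card_le_card (Finset.insert_subset hρS hsub)
      · rw [altCount_cons₂, if_neg hprod]
        simp only [Nat.zero_add]
        exact le_trans hIH (Finset.card_le_card hsub)

lemma altCount_le_card_roots (Q : ℝ[X]) (L : List ℝ) (hs : L.Pairwise (· < ·)) :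
    altCount Q L ≤ Q.roots.toFinset.card :=
  le_trans (alt_le_roots Q L hs) (Finset.card_le_card (Finset.filter_subset _ _))



lemma pos_chain {x y z : ℝ} (h1 : 0 < x * y) (h2 : 0 < y * z) : 0 < x * z := by
  nlinarith [mul_pos h1 h2, sq_nonneg y]

lemma chain_pn {x y z : ℝ} (h1 : 0 < x * y) (h2 : y * z < 0) : x * z < 0 := by
  nlinarith [mul_neg_of_pos_of_neg h1 h2, sq_nonneg y]

lemma chain_np {x y z : ℝ} (h1 : x * y < 0) (h2 : 0 < y * z) : x * z < 0 := by
  nlinarith [mul_neg_of_neg_of_pos h1 h2, sq_nonneg y]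

lemma chain_nn {x y z : ℝ} (h1 : x * y < 0) (h2 : y * z < 0) : 0 < x * z := by
  nlinarith [mul_pos_of_neg_of_neg h1 h2, sq_nonneg y]

lemma lt_iff_of_mul_pos {p q : ℝ} (h : 0 < p * q) : p < 0 ↔ q < 0 := by
  constructor <;> intro h' <;> nlinarith

lemma add_small_same_sign {p a : ℝ} (h : |a| < |p|) : 0 < (p + a) * p := by
  rcases abs_lt.1 h with ⟨h1, h2⟩
  rcases lt_trichotomy p 0 with hp | hp | hp
  · have : |p| = -p := abs_of_neg hp
    nlinarith
  · rw [hp] at h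
    exact absurd h (not_lt.2 (by simpa using abs_nonneg a))
  · have : |p| = p := abs_of_pos hp
    nlinarith

lemma exists_pos_lb (f : ℝ → ℝ) : ∀ (v : List ℝ), (∀ x ∈ v, f x ≠ 0) →
    ∃ ε : ℝ, 0 < ε ∧ ∀ x ∈ v, ε ≤ |f x| := by
  intro v
  induction v with
  | nil => intro _; exact ⟨1, one_pos, by simp⟩
  | cons a m ih =>
    intro h
    obtain ⟨ε, hε, hεle⟩ := ih (fun x hx => h x (List.mem_cons_of_mem _ hx))
    refine ⟨min ε |f a|, lt_min hε (abs_pos.2 (h a (by simp))), ?_⟩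
    intro x hx
    rcases List.mem_cons.1 hx with rfl | hx'
    · exact min_le_right _ _
    · exact le_trans (min_le_left _ _) (hεle x hx')

lemma sorted_split_neg (u : List ℝ) :
    ∀ x ∈ u.takeWhile (fun x => decide (x < 0)), x < 0 := by
  intro x hx
  have := List.mem_takeWhile_imp hx
  simpa using this

lemma sorted_split_pos (u : List ℝ) (hs : u.Pairwise (· < ·)) (h0 : ∀ x ∈ u, x ≠ 0) :
    ∀ x ∈ u.dropWhile (fun x => decide (x < 0)), 0 < x := by
  induction u with
  | nil => simp
  | cons a m ih =>
    by_cases ha : a < 0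
    · rw [List.dropWhile_cons_of_pos (by simpa using ha)]
      exact ih (List.pairwise_cons.1 hs).2 (fun x hx => h0 x (List.mem_cons_of_mem _ hx))
    · rw [List.dropWhile_cons_of_neg (by simpa using ha)]
      intro x hx
      rcases List.mem_cons.1 hx with rfl | hx'
      · have := h0 x (by simp)
        rcases lt_trichotomy x 0 with h | h | h
        · exact absurd h ha
        · exact absurd h this
        · exact h
      · have := (List.pairwise_cons.1 hs).1 x hx'
        have ha' : 0 ≤ a := not_lt.1 ha
        linarith



lemma mulcomm_lt {x y : ℝ} (h : x * y < 0) : y * x < 0 := by rwa [mul_comm]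
lemma mulcomm_pos {x y : ℝ} (h : 0 < x * y) : 0 < y * x := by rwa [mul_comm]

lemma witness_inner : ∀ (n : ℕ) (T : List ℕ), T.length ≤ n → (0 :: T).Pairwise (· < ·) →
    ∃ Q : ℝ[X], Q.eval 0 ≠ 0 ∧ (∀ m ∈ Q.support, m ∈ 0 :: T) ∧
      ∃ pts : List ℝ, pts ≠ [] ∧ pts.Pairwise (· < ·) ∧ (∀ x ∈ pts, x ≠ 0) ∧
        (∀ x ∈ pts, Q.eval x ≠ 0) ∧ Wl (0 :: T) ≤ altCount Q pts := by
  intro n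
  induction n with
  | zero =>
    intro T hlen _
    have hT : T = [] := List.length_eq_zero_iff.1 (Nat.le_zero.1 hlen)
    subst hT
    exact ⟨1, by simp, (by
        intro m hm
        have h := Polynomial.mem_support_iff.1 hm
        rw [Polynomial.coeff_one] at h
        by_cases hm0 : m = 0
        · simp [hm0]
        · rw [if_neg hm0] at h
          exact absurd rfl h), [1], by simp, by simp, by simp, by simp, by simp⟩
  | succ n ih =>
    intro T hlen hsort
    cases T with
    | nil =>
      exact ⟨1, by simp, (by
        intro m hm
        have h := Polynomial.mem_support_iff.1 hm
        rw [Polynomial.coeff_one] at h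
        by_cases hm0 : m = 0
        · simp [hm0]
        · rw [if_neg hm0] at h
          exact absurd rfl h), [1], by simp, by simp, by simp, by simp, by simp⟩
    | cons b s =>
      obtain ⟨h0lt, hsortbs⟩ := List.pairwise_cons.1 hsort
      have hb1 : 0 < b := h0lt b (by simp)
      have hblt : ∀ x ∈ s, b < x := (List.pairwise_cons.1 hsortbs).1
      set T' : List ℕ := s.map (· - b) with hT'
      have hT'sort : (0 :: T').Pairwise (· < ·) := by
        rw [List.pairwise_cons]
        constructor
        · intro x hx
          rw [hT', List.mem_map] at hx
          obtain ⟨y, hy, rfl⟩ := hx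
          have := hblt y hy
          omega
        · rw [hT', List.pairwise_map]
          apply ((List.pairwise_cons.1 hsortbs).2).imp_of_mem
          intro x y hx hy hxy
          have hbx := hblt x hx
          show x - b < y - b
          omega
      have hslen : s.length + 1 ≤ n + 1 := by simpa using hlen
      have hT'len : T'.length ≤ n := by rw [hT']; simp; omega
      obtain ⟨Q₁, hq0, hsupp₁, u, hu_ne, hu_sort, hu_nz, hu_ev, hu_count⟩ :=
        ih T' hT'len hT'sort
      set S : ℝ := Q₁.eval 0 with hS
      set P : ℝ[X] := X ^ b * Q₁ with hPdef
      have hP : ∀ x : ℝ, P.eval x = x ^ b * Q₁.eval x := by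
        intro x; rw [hPdef]; simp
      have hPu_nz : ∀ x ∈ u, P.eval x ≠ 0 := by
        intro x hx
        rw [hP]
        exact mul_ne_zero (pow_ne_zero _ (hu_nz x hx)) (hu_ev x hx)
      obtain ⟨ε, hε, hεle⟩ := exists_pos_lb (fun x => P.eval x) u hPu_nz
      obtain ⟨r, hr, hrle⟩ := exists_pos_lb (fun x => x) u hu_nz
      have hsgn : ∃ δ₀ : ℝ, 0 < δ₀ ∧ ∀ x : ℝ, |x| < δ₀ → 0 < Q₁.eval x * S := by
        have hcont : Continuous fun x : ℝ => Q₁.eval x * S :=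
          (Q₁.continuous).mul continuous_const
        have hval : (0:ℝ) < Q₁.eval 0 * S := by rw [hS]; exact mul_self_pos.2 hq0
        have hev : ∀ᶠ x in nhds (0:ℝ), 0 < Q₁.eval x * S :=
          (hcont.continuousAt (x := 0)).eventually (eventually_gt_nhds hval)
        rw [Metric.eventually_nhds_iff] at hev
        obtain ⟨δ₀, hδ₀, h⟩ := hev
        exact ⟨δ₀, hδ₀, fun x hx => h (by simpa [Real.dist_eq] using hx)⟩
      obtain ⟨δ₀, hδ₀, hδ₀sgn⟩ := hsgn
      set δ : ℝ := min (δ₀ / 2) (r / 2) with hδdef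
      have hδpos : 0 < δ := lt_min (by linarith) (by linarith)
      have hδr : δ < r := lt_of_le_of_lt (min_le_right _ _) (by linarith)
      have hδ₀' : δ < δ₀ := lt_of_le_of_lt (min_le_left _ _) (by linarith)
      have hδsgn : ∀ x : ℝ, |x| ≤ δ → 0 < Q₁.eval x * S :=
        fun x hx => hδ₀sgn x (lt_of_le_of_lt hx hδ₀')
      have hδne : δ ≠ 0 := ne_of_gt hδpos
      have hνδne : -δ ≠ 0 := by simpa using hδne
      have hq1δ : 0 < Q₁.eval δ * S := hδsgn δ (by rw [abs_of_pos hδpos])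
      have hq1δ_ne : Q₁.eval δ ≠ 0 := fun h0 => by rw [h0] at hq1δ; simp at hq1δ
      have hq1νδ : 0 < Q₁.eval (-δ) * S := hδsgn (-δ) (by rw [abs_neg, abs_of_pos hδpos])
      have hq1νδ_ne : Q₁.eval (-δ) ≠ 0 := fun h0 => by rw [h0] at hq1νδ; simp at hq1νδ
      have hPδnz : P.eval δ ≠ 0 := by
        rw [hP]
        exact mul_ne_zero (pow_ne_zero _ hδne) hq1δ_ne
      have hPνδnz : P.eval (-δ) ≠ 0 := by
        rw [hP]
        exact mul_ne_zero (pow_ne_zero _ hνδne) hq1νδ_ne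
      set m : ℝ := min ε (min |P.eval δ| |P.eval (-δ)|) with hmdef
      have hm : 0 < m := lt_min hε (lt_min (abs_pos.2 hPδnz) (abs_pos.2 hPνδnz))
      set sg : ℝ := if Even b then -S else S with hsgdef
      have hSne : S ≠ 0 := hq0
      have hsg_ne : sg ≠ 0 := by
        rw [hsgdef]; split <;> simpa using hSne
      set a : ℝ := (m / (2 * |S|)) * sg with hadef
      have hfa_pos : 0 < m / (2 * |S|) := by positivity
      have ha_ne : a ≠ 0 := mul_ne_zero (ne_of_gt hfa_pos) hsg_ne
      have ha_sg : 0 < a * sg := by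
        rw [hadef, mul_assoc]
        exact mul_pos hfa_pos (mul_self_pos.2 hsg_ne)
      have habs_sg : |sg| = |S| := by
        rw [hsgdef]; split <;> simp
      have ha_abs : |a| = m / 2 := by
        rw [hadef, abs_mul, abs_of_pos hfa_pos, habs_sg]
        field_simp
      have ha_lt_ε : |a| < ε := by
        rw [ha_abs]
        have : m ≤ ε := min_le_left _ _
        linarith
      have ha_lt_Pδ : |a| < |P.eval δ| := by
        rw [ha_abs]
        have : m ≤ |P.eval δ| := le_trans (min_le_right _ _) (min_le_left _ _)
        linarith
      have ha_lt_Pνδ : |a| < |P.eval (-δ)| := by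
        rw [ha_abs]
        have : m ≤ |P.eval (-δ)| := le_trans (min_le_right _ _) (min_le_right _ _)
        linarith
      have hτex : ∃ τ₀ : ℝ, 0 < τ₀ ∧ ∀ x : ℝ, |x| < τ₀ → |P.eval x| < |a| := by
        have hcont : ContinuousAt (fun x : ℝ => P.eval x) 0 := (P.continuous).continuousAt
        have hP0 : P.eval 0 = 0 := by
          rw [hP, zero_pow (by omega : b ≠ 0), zero_mul]
        obtain ⟨τ₀, hτ₀, h⟩ := Metric.continuousAt_iff.1 hcont |a| (abs_pos.2 ha_ne)
        refine ⟨τ₀, hτ₀, fun x hx => ?_⟩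
        have := h (x := x) (by simpa [Real.dist_eq] using hx)
        rw [Real.dist_eq, hP0, sub_zero] at this
        exact this
      obtain ⟨τ₀, hτ₀, hτsmall⟩ := hτex
      set τ : ℝ := min (τ₀ / 2) (δ / 2) with hτdef
      have hτpos : 0 < τ := lt_min (by linarith) (by linarith)
      have hτδ : τ < δ := lt_of_le_of_lt (min_le_right _ _) (by linarith)
      have hτ₀' : τ < τ₀ := lt_of_le_of_lt (min_le_left _ _) (by linarith)
      have hPτ : |P.eval τ| < |a| := hτsmall τ (by rw [abs_of_pos hτpos]; exact hτ₀')
      have hPντ : |P.eval (-τ)| < |a| :=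
        hτsmall (-τ) (by rw [abs_neg, abs_of_pos hτpos]; exact hτ₀')
      set Q : ℝ[X] := P + C a with hQdef
      have hQe : ∀ x : ℝ, Q.eval x = P.eval x + a := by intro x; rw [hQdef]; simp
      have hQ0 : Q.eval 0 = a := by
        rw [hQe, hP, zero_pow (by omega : b ≠ 0), zero_mul, zero_add]
      -- sign anchors
      have hQu : ∀ x ∈ u, 0 < Q.eval x * P.eval x := by
        intro x hx
        rw [hQe]
        exact add_small_same_sign (lt_of_lt_of_le ha_lt_ε (hεle x hx))
      have hQδa : 0 < Q.eval δ * P.eval δ := by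
        rw [hQe]; exact add_small_same_sign ha_lt_Pδ
      have hQνδa : 0 < Q.eval (-δ) * P.eval (-δ) := by
        rw [hQe]; exact add_small_same_sign ha_lt_Pνδ
      have hQτa : 0 < Q.eval τ * a := by
        rw [hQe, add_comm]
        exact add_small_same_sign hPτ
      have hQντa : 0 < Q.eval (-τ) * a := by
        rw [hQe, add_comm]
        exact add_small_same_sign hPντ
      -- pairwise transfer on u
      have hpair : ∀ x ∈ u, ∀ y ∈ u, 0 < x * y →
          (Q.eval x * Q.eval y < 0 ↔ Q₁.eval x * Q₁.eval y < 0) := by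
        intro x hx y hy hxy
        have h1 : 0 < (Q.eval x * Q.eval y) * (P.eval x * P.eval y) := by
          have h := mul_pos (hQu x hx) (hQu y hy)
          calc (0:ℝ) < (Q.eval x * P.eval x) * (Q.eval y * P.eval y) := h
            _ = (Q.eval x * Q.eval y) * (P.eval x * P.eval y) := by ring
        have h2 : 0 < (P.eval x * P.eval y) * (Q₁.eval x * Q₁.eval y) := by
          have hpow : (0:ℝ) < (x * y) ^ b := pow_pos hxy b
          have hq1 : 0 < (Q₁.eval x * Q₁.eval y) * (Q₁.eval x * Q₁.eval y) :=
            mul_self_pos.2 (mul_ne_zero (hu_ev x hx) (hu_ev y hy))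
          calc (0:ℝ) < (x*y)^b * ((Q₁.eval x * Q₁.eval y) * (Q₁.eval x * Q₁.eval y)) :=
              mul_pos hpow hq1
            _ = (P.eval x * P.eval y) * (Q₁.eval x * Q₁.eval y) := by
              rw [hP, hP, mul_pow]; ring
        exact lt_iff_of_mul_pos (pos_chain h1 h2)
      -- anchor at δ
      have hQδS : 0 < Q.eval δ * S := by
        have h2 : 0 < P.eval δ * Q₁.eval δ := by
          calc (0:ℝ) < δ^b * (Q₁.eval δ * Q₁.eval δ) :=
              mul_pos (pow_pos hδpos b) (mul_self_pos.2 hq1δ_ne)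
            _ = P.eval δ * Q₁.eval δ := by rw [hP]; ring
        exact pos_chain (pos_chain hQδa h2) hq1δ
      -- positive-point anchors
      have hQposQ₁ : ∀ y ∈ u, 0 < y → 0 < Q.eval y * Q₁.eval y := by
        intro y hy hypos
        have h2 : 0 < P.eval y * Q₁.eval y := by
          calc (0:ℝ) < y^b * (Q₁.eval y * Q₁.eval y) :=
              mul_pos (pow_pos hypos b) (mul_self_pos.2 (hu_ev y hy))
            _ = P.eval y * Q₁.eval y := by rw [hP]; ring
        exact pos_chain (hQu y hy) h2
      -- parity-dependent facts
      have hparity :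
          (Q.eval (-δ) * Q.eval (-τ) < 0) ∧
          (wgap b ≤ 1 + (if Q.eval τ * Q.eval δ < 0 then 1 else 0)) ∧
          (∀ x ∈ u, x < 0 → Q₁.eval x * S < 0 → Q.eval x * Q.eval (-δ) < 0) := by
        rcases Nat.even_or_odd b with hb | hb
        · -- b even : sg = -S
          have hsg_eq : sg = -S := by rw [hsgdef, if_pos hb]
          have haS : a * S < 0 := by
            have h := ha_sg
            rw [hsg_eq] at h
            nlinarith
          have hQτS : Q.eval τ * S < 0 := chain_pn hQτa haS
          have hQντS : Q.eval (-τ) * S < 0 := chain_pn hQντa haS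
          have hQνδS : 0 < Q.eval (-δ) * S := by
            have h2 : 0 < P.eval (-δ) * Q₁.eval (-δ) := by
              have hpow : (0:ℝ) < (-δ) ^ b := hb.pow_pos hνδne
              calc (0:ℝ) < (-δ)^b * (Q₁.eval (-δ) * Q₁.eval (-δ)) :=
                  mul_pos hpow (mul_self_pos.2 hq1νδ_ne)
                _ = P.eval (-δ) * Q₁.eval (-δ) := by rw [hP]; ring
            exact pos_chain (pos_chain hQνδa h2) hq1νδ
          refine ⟨?_, ?_, ?_⟩
          · exact chain_pn hQνδS (mulcomm_lt hQντS)
          · have h3 : Q.eval τ * Q.eval δ < 0 := chain_np hQτS (mulcomm_pos hQδS)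
            rw [if_pos h3]
            have : wgap b = 2 := by unfold wgap; rw [if_pos hb]
            omega
          · intro x hx hxneg hxS
            have hPQx : 0 < P.eval x * Q₁.eval x := by
              have hpow : (0:ℝ) < x ^ b := hb.pow_pos (hu_nz x hx)
              calc (0:ℝ) < x^b * (Q₁.eval x * Q₁.eval x) :=
                  mul_pos hpow (mul_self_pos.2 (hu_ev x hx))
                _ = P.eval x * Q₁.eval x := by rw [hP]; ring
            have h1 : 0 < Q.eval x * Q₁.eval x := pos_chain (hQu x hx) hPQx
            have h2 : Q.eval x * S < 0 := chain_pn h1 hxS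
            exact chain_np h2 (mulcomm_pos hQνδS)
        · -- b odd : sg = S
          have hsg_eq : sg = S := by
            rw [hsgdef, if_neg (by simpa using Nat.not_even_iff_odd.2 hb)]
          have haS : 0 < a * S := by rw [← hsg_eq]; exact ha_sg
          have hQτS : 0 < Q.eval τ * S := pos_chain hQτa haS
          have hQντS : 0 < Q.eval (-τ) * S := pos_chain hQντa haS
          have hQνδS : Q.eval (-δ) * S < 0 := by
            have h2 : P.eval (-δ) * Q₁.eval (-δ) < 0 := by
              have hpow : (-δ : ℝ) ^ b < 0 := hb.pow_neg (by linarith)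
              calc P.eval (-δ) * Q₁.eval (-δ)
                  = (-δ)^b * (Q₁.eval (-δ) * Q₁.eval (-δ)) := by rw [hP]; ring
                _ < 0 := mul_neg_of_neg_of_pos hpow (mul_self_pos.2 hq1νδ_ne)
            exact chain_np (chain_pn hQνδa h2) hq1νδ
          refine ⟨?_, ?_, ?_⟩
          · exact chain_np hQνδS (mulcomm_pos hQντS)
          · have : wgap b = 1 := by
              unfold wgap
              rw [if_neg (by simpa using Nat.not_even_iff_odd.2 hb)]
            omega
          · intro x hx hxneg hxS
            have hPQx : P.eval x * Q₁.eval x < 0 := by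
              have hpow : (x:ℝ) ^ b < 0 := hb.pow_neg hxneg
              calc P.eval x * Q₁.eval x
                  = x^b * (Q₁.eval x * Q₁.eval x) := by rw [hP]; ring
                _ < 0 := mul_neg_of_neg_of_pos hpow (mul_self_pos.2 (hu_ev x hx))
            have h1 : Q.eval x * Q₁.eval x < 0 := chain_pn (hQu x hx) hPQx
            have h2 : 0 < Q.eval x * S := chain_nn h1 hxS
            exact chain_pn h2 (mulcomm_lt hQνδS)
      obtain ⟨hi1, hi3, hF4⟩ := hparity
      have hF5 : ∀ y ∈ u, 0 < y → Q₁.eval y * S < 0 → Q.eval δ * Q.eval y < 0 := by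
        intro y hy hypos hyS
        have h2 : Q.eval y * S < 0 := chain_pn (hQposQ₁ y hy hypos) hyS
        exact chain_pn hQδS (mulcomm_lt h2)
      -- split u into negative and positive parts
      set U₁ : List ℝ := u.takeWhile (fun x => decide (x < 0)) with hU₁
      set U₂ : List ℝ := u.dropWhile (fun x => decide (x < 0)) with hU₂
      have hu_split : U₁ ++ U₂ = u := List.takeWhile_append_dropWhile
      have hU₁neg : ∀ x ∈ U₁, x < 0 := fun x hx => sorted_split_neg u x (hU₁ ▸ hx)
      have hU₂pos : ∀ x ∈ U₂, 0 < x := fun x hx =>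
        sorted_split_pos u hu_sort hu_nz x (hU₂ ▸ hx)
      have hU₁sub : ∀ x ∈ U₁, x ∈ u := fun x hx => by
        rw [← hu_split]; exact List.mem_append_left _ hx
      have hU₂sub : ∀ x ∈ U₂, x ∈ u := fun x hx => by
        rw [← hu_split]; exact List.mem_append_right _ hx
      have hU₁sorted : U₁.Pairwise (· < ·) :=
        List.Pairwise.sublist (hU₁ ▸ List.takeWhile_sublist _) hu_sort
      have hU₂sorted : U₂.Pairwise (· < ·) :=
        List.Pairwise.sublist (hU₂ ▸ List.dropWhile_sublist _) hu_sort
      have hU₁lt : ∀ x ∈ U₁, x < -δ := by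
        intro x hx
        have h1 := hrle x (hU₁sub x hx)
        have h2 := hU₁neg x hx
        rw [abs_of_neg h2] at h1
        linarith
      have hU₂gt : ∀ x ∈ U₂, δ < x := by
        intro x hx
        have h1 := hrle x (hU₂sub x hx)
        have h2 := hU₂pos x hx
        rw [abs_of_pos h2] at h1
        linarith
      set mid : List ℝ := [-δ, -τ, τ, δ] with hmid
      set pts : List ℝ := U₁ ++ (mid ++ U₂) with hpts
      have hmid_sorted : mid.Pairwise (· < ·) := by
        rw [hmid]
        refine List.pairwise_cons.2 ⟨?_, List.pairwise_cons.2 ⟨?_, List.pairwise_cons.2 ⟨?_, by simp⟩⟩⟩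
        · intro x hx
          simp only [List.mem_cons, List.not_mem_nil, or_false] at hx
          rcases hx with rfl | rfl | rfl
          · exact neg_lt_neg hτδ
          · exact lt_trans (neg_lt_zero.2 hδpos) hτpos
          · exact lt_trans (neg_lt_zero.2 hδpos) hδpos
        · intro x hx
          simp only [List.mem_cons, List.not_mem_nil, or_false] at hx
          rcases hx with rfl | rfl
          · exact lt_trans (neg_lt_zero.2 hτpos) hτpos
          · exact lt_trans (neg_lt_zero.2 hτpos) hδpos
        · intro x hx
          simp only [List.mem_cons, List.not_mem_nil, or_false] at hx
          subst hx
          exact hτδ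
      have hmidU₂_sorted : (mid ++ U₂).Pairwise (· < ·) := by
        rw [List.pairwise_append]
        refine ⟨hmid_sorted, hU₂sorted, ?_⟩
        intro x hx y hy
        have hub := hU₂gt y hy
        rw [hmid] at hx
        simp only [List.mem_cons, List.not_mem_nil, or_false] at hx
        rcases hx with rfl | rfl | rfl | rfl
        · exact lt_trans (neg_lt_zero.2 hδpos) (lt_trans hδpos hub)
        · exact lt_trans (neg_lt_zero.2 hτpos) (lt_trans hδpos hub)
        · exact lt_trans hτδ hub
        · exact hub
      have hpts_sorted : pts.Pairwise (· < ·) := by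
        rw [hpts, List.pairwise_append]
        refine ⟨hU₁sorted, hmidU₂_sorted, ?_⟩
        intro x hx y hy
        have h1 := hU₁lt x hx
        rcases List.mem_append.1 hy with hy | hy
        · rw [hmid] at hy
          simp only [List.mem_cons, List.not_mem_nil, or_false] at hy
          rcases hy with rfl | rfl | rfl | rfl
          · exact h1
          · exact lt_trans h1 (neg_lt_neg hτδ)
          · exact lt_trans h1 (lt_trans (neg_lt_zero.2 hδpos) hτpos)
          · exact lt_trans h1 (lt_trans (neg_lt_zero.2 hδpos) hδpos)
        · have h2 := hU₂gt y hy
          exact lt_trans h1 (lt_trans (neg_lt_zero.2 hδpos) (lt_trans hδpos h2))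
      have hpts_ne : pts ≠ [] := by
        rw [hpts, hmid]
        simp
      have hpts_nz : ∀ x ∈ pts, x ≠ 0 := by
        intro x hx
        rw [hpts] at hx
        rcases List.mem_append.1 hx with hx | hx
        · exact ne_of_lt (hU₁neg x hx)
        · rcases List.mem_append.1 hx with hx | hx
          · rw [hmid] at hx
            simp only [List.mem_cons, List.not_mem_nil, or_false] at hx
            rcases hx with rfl | rfl | rfl | rfl
            · exact hνδne
            · simpa using ne_of_gt hτpos
            · exact ne_of_gt hτpos
            · exact hδne
          · exact ne_of_gt (hU₂pos x hx)
      have hQnz_of_anchor : ∀ x : ℝ, ∀ w : ℝ, 0 < Q.eval x * w → Q.eval x ≠ 0 := by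
        intro x w h h0
        rw [h0] at h
        simp at h
      have hQpts_nz : ∀ x ∈ pts, Q.eval x ≠ 0 := by
        intro x hx
        rw [hpts] at hx
        rcases List.mem_append.1 hx with hx | hx
        · exact hQnz_of_anchor x _ (hQu x (hU₁sub x hx))
        · rcases List.mem_append.1 hx with hx | hx
          · rw [hmid] at hx
            simp only [List.mem_cons, List.not_mem_nil, or_false] at hx
            rcases hx with rfl | rfl | rfl | rfl
            · exact hQnz_of_anchor _ _ hQνδa
            · exact hQnz_of_anchor _ _ hQντa
            · exact hQnz_of_anchor _ _ hQτa
            · exact hQnz_of_anchor _ _ hQδa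
          · exact hQnz_of_anchor x _ (hQu x (hU₂sub x hx))
      -- support of Q
      have hQsupp : ∀ m₁ ∈ Q.support, m₁ ∈ 0 :: b :: s := by
        intro m₁ hm
        have hc : Q.coeff m₁ ≠ 0 := mem_support_iff.1 hm
        by_cases hm0 : m₁ = 0
        · subst hm0; simp
        · have hCa : (C a).coeff m₁ = 0 := by rw [coeff_C, if_neg hm0]
          have hPc : P.coeff m₁ ≠ 0 := by
            rw [hQdef, coeff_add, hCa, add_zero] at hc
            exact hc
          rw [hPdef, mul_comm, Polynomial.coeff_mul_X_pow'] at hPc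
          by_cases hbm : b ≤ m₁
          · rw [if_pos hbm] at hPc
            have hmem := hsupp₁ (m₁ - b) (mem_support_iff.2 hPc)
            rcases List.mem_cons.1 hmem with h | h
            · have : m₁ = b := by omega
              subst this
              simp
            · rw [hT', List.mem_map] at h
              obtain ⟨x, hxs, hxe⟩ := h
              have hbx := hblt x hxs
              have : m₁ = x := by omega
              subst this
              simp [List.mem_cons, hxs]
          · rw [if_neg hbm] at hPc
            exact absurd rfl hPc
      -- alternation count bookkeeping
      have hACU₁ : altCount Q U₁ = altCount Q₁ U₁ := by
        apply altCount_congr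
        intro x hx y hy
        exact hpair x (hU₁sub x hx) y (hU₁sub y hy)
          (mul_pos_of_neg_of_neg (hU₁neg x hx) (hU₁neg y hy))
      have hACU₂ : altCount Q U₂ = altCount Q₁ U₂ := by
        apply altCount_congr
        intro x hx y hy
        exact hpair x (hU₂sub x hx) y (hU₂sub y hy)
          (mul_pos (hU₂pos x hx) (hU₂pos y hy))
      have hACmid : wgap b ≤ altCount Q mid := by
        have e1 : altCount Q mid = (if Q.eval (-δ) * Q.eval (-τ) < 0 then 1 else 0) +
            ((if Q.eval (-τ) * Q.eval τ < 0 then 1 else 0) +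
            ((if Q.eval τ * Q.eval δ < 0 then 1 else 0) + 0)) := by
          rw [hmid]
          rfl
        rw [e1, if_pos hi1]
        split_ifs at hi3 ⊢ <;> omega
      -- the goal bound
      have hWlgoal : Wl (0 :: b :: s) = wgap b + Wl (0 :: T') := by
        have h1 : (b :: s).map (· - b) = 0 :: T' := by
          rw [hT']
          simp
        have h2 : Wl ((b :: s).map (· - b)) = Wl (b :: s) :=
          Wl_map_sub _ _ (fun x hx => by
            rcases List.mem_cons.1 hx with rfl | hx'
            · exact le_refl _
            · exact le_of_lt (hblt x hx'))
        rw [Wl_cons, Nat.sub_zero, ← h2, h1]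
      refine ⟨Q, by rw [hQ0]; exact ha_ne, hQsupp, pts, hpts_ne, hpts_sorted, hpts_nz,
        hQpts_nz, ?_⟩
      rw [hWlgoal]
      -- count: case on emptiness of U₁, U₂
      have hmid_ne : mid ≠ [] := by rw [hmid]; simp
      have hmidU₂_ne : mid ++ U₂ ≠ [] := by
        intro h
        rw [List.append_eq_nil_iff] at h
        exact hmid_ne h.1
      have hheadmid : (mid ++ U₂).head hmidU₂_ne = -δ := by
        have h1 : (mid ++ U₂).head? = some (-δ) := by rw [hmid]; rfl
        have h2 := List.head?_eq_head hmidU₂_ne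
        rw [h1] at h2
        exact (Option.some_inj.1 h2).symm
      have hlastmid : mid.getLast hmid_ne = δ := by
        have h1 : mid.getLast? = some δ := by rw [hmid]; rfl
        have h2 := List.getLast?_eq_getLast (l := mid) hmid_ne
        rw [h1] at h2
        exact (Option.some_inj.1 h2).symm
      rcases hU₂e : U₂ with _ | ⟨β, U₂t⟩
      · -- U₂ empty
        have hU₁ne : U₁ ≠ [] := by
          intro h
          apply hu_ne
          rw [← hu_split, h, hU₂e]
          rfl
        have hACu : altCount Q₁ u = altCount Q₁ U₁ := by
          rw [← hu_split, hU₂e, List.append_nil]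
        have hptseq : pts = U₁ ++ mid := by rw [hpts, hU₂e, List.append_nil]
        rw [hptseq, altCount_append Q U₁ mid hU₁ne hmid_ne]
        have h1 : Wl (0 :: T') ≤ altCount Q U₁ := by rw [hACU₁, ← hACu]; exact hu_count
        have h2 := hACmid
        split_ifs <;> omega
      · have hU₂ne : U₂ ≠ [] := by rw [hU₂e]; simp
        have hheadU₂ : U₂.head hU₂ne = β := by
          have h1 : U₂.head? = some β := by rw [hU₂e]; rfl
          have h2 := List.head?_eq_head hU₂ne
          rw [h1] at h2
          exact (Option.some_inj.1 h2).symm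
        rcases hU₁e : U₁ with _ | ⟨α₁, U₁t⟩
        · -- U₁ empty : pts = mid ++ U₂
          have hACu : altCount Q₁ u = altCount Q₁ U₂ := by
            rw [← hu_split, hU₁e, List.nil_append]
          have hptseq : pts = mid ++ U₂ := by rw [hpts, hU₁e, List.nil_append]
          rw [hptseq, altCount_append Q mid U₂ hmid_ne hU₂ne]
          have h1 : Wl (0 :: T') ≤ altCount Q U₂ := by rw [hACU₂, ← hACu]; exact hu_count
          have h2 := hACmid
          split_ifs <;> omega
        · -- both nonempty
          have hU₁ne : U₁ ≠ [] := by rw [hU₁e]; simp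
          set α : ℝ := U₁.getLast hU₁ne with hα
          have hαmem : α ∈ U₁ := List.getLast_mem _
          have hβmem : β ∈ U₂ := by rw [hU₂e]; simp
          have hαu : α ∈ u := hU₁sub _ hαmem
          have hβu : β ∈ u := hU₂sub _ hβmem
          have hACu : altCount Q₁ u = altCount Q₁ U₁ +
              (if Q₁.eval α * Q₁.eval (U₂.head hU₂ne) < 0 then 1 else 0) +
              altCount Q₁ U₂ := by
            conv_lhs => rw [← hu_split]
            exact altCount_append Q₁ U₁ U₂ hU₁ne hU₂ne
          have hACpts : altCount Q pts = altCount Q U₁ +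
              (if Q.eval α * Q.eval (-δ) < 0 then 1 else 0) +
              (altCount Q mid +
                (if Q.eval (mid.getLast hmid_ne) * Q.eval (U₂.head hU₂ne) < 0 then 1 else 0) +
                altCount Q U₂) := by
            rw [hpts, altCount_append Q U₁ (mid ++ U₂) hU₁ne hmidU₂_ne, hheadmid,
              altCount_append Q mid U₂ hmid_ne hU₂ne]
          have hbdry : (if Q₁.eval α * Q₁.eval β < 0 then 1 else 0 : ℕ) ≤
              (if Q.eval α * Q.eval (-δ) < 0 then 1 else 0) +
              (if Q.eval δ * Q.eval β < 0 then 1 else 0) := by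
            by_cases hx : Q₁.eval α * Q₁.eval β < 0
            · have hdisj : Q₁.eval α * S < 0 ∨ Q₁.eval β * S < 0 := by
                by_contra hcon
                push_neg at hcon
                obtain ⟨h1, h2⟩ := hcon
                have h1' : 0 < Q₁.eval α * S :=
                  lt_of_le_of_ne h1 (Ne.symm (mul_ne_zero (hu_ev α hαu) hSne))
                have h2' : 0 < Q₁.eval β * S :=
                  lt_of_le_of_ne h2 (Ne.symm (mul_ne_zero (hu_ev β hβu) hSne))
                have : 0 < Q₁.eval α * Q₁.eval β :=
                  pos_chain h1' (mulcomm_pos h2')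
                linarith
              rcases hdisj with hd | hd
              · have := hF4 α hαu (hU₁neg α hαmem) hd
                rw [if_pos hx, if_pos this]
                omega
              · have := hF5 β hβu (hU₂pos β hβmem) hd
                rw [if_pos hx, if_pos this]
                split_ifs <;> omega
            · rw [if_neg hx]
              omega
          rw [hheadU₂] at hACu
          have hc : Wl (0 :: T') ≤ altCount Q₁ U₁ +
              (if Q₁.eval α * Q₁.eval β < 0 then 1 else 0) + altCount Q₁ U₂ := by
            rw [← hACu]; exact hu_count
          rw [hACpts, hlastmid, hheadU₂, hACU₁, hACU₂]
          have h2 := hACmid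
          rw [← hACU₁, ← hACU₂] at hc
          split_ifs at hc hbdry ⊢ <;> omega



/-- any polynomial whose monomials all lie in `R` lies in `R` -/
lemma mem_of_supp (R : Subalgebra ℝ ℝ[X]) (q : ℝ[X])
    (h : ∀ m ∈ q.support, (X : ℝ[X]) ^ m ∈ R) : q ∈ R := by
  rw [q.as_sum_support]
  apply Subalgebra.sum_mem
  intro i hi
  rw [← Polynomial.C_mul_X_pow_eq_monomial]
  exact mul_mem (R.algebraMap_mem _) (h i hi)

/-- elements of a monomial algebra have support in the exponent monoid -/
lemma supp_char (R : Subalgebra ℝ ℝ[X]) (r : ℕ) (dv : Fin r → ℕ)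
    (hR : R = Algebra.adjoin ℝ (Set.range fun i => (X : ℝ[X]) ^ dv i)) :
    ∀ f ∈ R, ∀ m ∈ f.support, (X : ℝ[X]) ^ m ∈ R := by
  intro f hf
  have hgen : ∀ i : Fin r, (X : ℝ[X]) ^ dv i ∈ R := by
    rw [hR]
    intro i
    exact Algebra.subset_adjoin ⟨i, rfl⟩
  rw [hR] at hf
  induction hf using Algebra.adjoin_induction with
  | mem x hx =>
    obtain ⟨i, rfl⟩ := hx
    intro m hm
    have : m = dv i := by
      by_contra hne
      have := Polynomial.mem_support_iff.1 hm
      rw [Polynomial.coeff_X_pow, if_neg (by exact fun h => hne h)] at this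
      exact this rfl
    rw [this]
    exact hgen i
  | algebraMap c =>
    intro m hm
    have : m = 0 := by
      by_contra hne
      have := Polynomial.mem_support_iff.1 hm
      have hC : (Polynomial.C c).coeff m = 0 := by
        rw [Polynomial.coeff_C, if_neg hne]
      exact this hC
    rw [this, pow_zero]
    exact one_mem R
  | add x y hx hy ihx ihy =>
    intro m hm
    rcases Finset.mem_union.1 (Polynomial.support_add hm) with h | h
    · exact ihx m h
    · exact ihy m h
  | mul x y hx hy ihx ihy =>
    intro m hm
    have hne := Polynomial.mem_support_iff.1 hm
    rw [Polynomial.coeff_mul] at hne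
    obtain ⟨⟨i, j⟩, hij, hij0⟩ := Finset.exists_ne_zero_of_sum_ne_zero hne
    have hij' : i + j = m := Finset.HasAntidiagonal.mem_antidiagonal.1 hij
    have hxi : x.coeff i ≠ 0 := fun h0 => hij0 (by rw [h0, zero_mul])
    have hyj : y.coeff j ≠ 0 := fun h0 => hij0 (by rw [h0, mul_zero])
    rw [← hij', pow_add]
    exact mul_mem (ihx i (Polynomial.mem_support_iff.2 hxi))
      (ihy j (Polynomial.mem_support_iff.2 hyj))

lemma descartes_ge (R : Subalgebra ℝ ℝ[X]) (c : ℕ) (w : ℝ[X]) (hw : w ∈ R)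
    (hw0 : w ≠ 0) (hdeg : w.natDegree ≤ c) :
    w.roots.toFinset.card ≤ descartesNumber R c := by
  apply le_csSup
  · refine ⟨c, ?_⟩
    rintro m ⟨g, hg, hg0, hgd, rfl⟩
    calc g.roots.toFinset.card ≤ Multiset.card g.roots := Multiset.toFinset_card_le _
      _ ≤ g.natDegree := Polynomial.card_roots' g
      _ ≤ c := hgd
  · exact ⟨w, hw, hw0, hdeg, rfl⟩

/-- key witness lemma: a strictly increasing chain of exponents available in `R`,
all at most `c`, forces the Descartes number to be large. -/
lemma descartes_lower (R : Subalgebra ℝ ℝ[X]) (c : ℕ) (L : List ℕ)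
    (hsort : L.Pairwise (· < ·)) (hne : L ≠ [])
    (hmem : ∀ m₁ ∈ L, (X : ℝ[X]) ^ m₁ ∈ R) (hle : ∀ m₁ ∈ L, m₁ ≤ c) :
    (if L.head hne = 0 then 0 else 1) + Wl L ≤ descartesNumber R c := by
  rcases L with _ | ⟨e, t⟩
  · exact absurd rfl hne
  change (if e = 0 then 0 else 1) + Wl (e :: t) ≤ descartesNumber R c
  obtain ⟨helt, hsortt⟩ := List.pairwise_cons.1 hsort
  set T : List ℕ := t.map (· - e) with hT
  have hTsort : (0 :: T).Pairwise (· < ·) := by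
    rw [List.pairwise_cons]
    constructor
    · intro x hx
      rw [hT, List.mem_map] at hx
      obtain ⟨y, hy, rfl⟩ := hx
      have := helt y hy
      omega
    · rw [hT, List.pairwise_map]
      apply hsortt.imp_of_mem
      intro x y hx hy hxy
      have := helt x hx
      show x - e < y - e
      omega
  obtain ⟨Q, hQ0, hQsupp, pts, hpts_ne, hpts_sort, hpts_nz, hQpts_nz, hcount⟩ :=
    witness_inner T.length T le_rfl hTsort
  have hQne : Q ≠ 0 := fun h0 => hQ0 (by rw [h0]; simp)
  set w : ℝ[X] := X ^ e * Q with hw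
  have hwne : w ≠ 0 := mul_ne_zero (pow_ne_zero _ Polynomial.X_ne_zero) hQne
  have hwsupp : ∀ m₁ ∈ w.support, m₁ ∈ e :: t := by
    intro m₁ hm
    have hc : w.coeff m₁ ≠ 0 := Polynomial.mem_support_iff.1 hm
    rw [hw, mul_comm, Polynomial.coeff_mul_X_pow'] at hc
    by_cases hem : e ≤ m₁
    · rw [if_pos hem] at hc
      have := hQsupp (m₁ - e) (Polynomial.mem_support_iff.2 hc)
      rcases List.mem_cons.1 this with h | h
      · have : m₁ = e := by omega
        rw [this]; simp
      · rw [hT, List.mem_map] at h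
        obtain ⟨x, hxs, hxe⟩ := h
        have := helt x hxs
        have : m₁ = x := by omega
        rw [this]
        exact List.mem_cons_of_mem _ hxs
    · rw [if_neg hem] at hc
      exact absurd rfl hc
  have hwR : w ∈ R := mem_of_supp R w (fun m₁ hm => hmem m₁ (hwsupp m₁ hm))
  have hwdeg : w.natDegree ≤ c :=
    hle _ (hwsupp _ (Polynomial.natDegree_mem_support_of_nonzero hwne))
  have hWlT : Wl (0 :: T) = Wl (e :: t) := by
    have h1 : (e :: t).map (· - e) = 0 :: T := by rw [hT]; simp
    rw [← h1]
    exact Wl_map_sub _ _ (fun x hx => by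
      rcases List.mem_cons.1 hx with rfl | hx'
      · exact le_refl _
      · exact le_of_lt (helt x hx'))
  have hQroots : Wl (e :: t) ≤ Q.roots.toFinset.card := by
    rw [← hWlT]
    exact le_trans hcount (altCount_le_card_roots Q pts hpts_sort)
  have hQsubw : Q.roots.toFinset ⊆ w.roots.toFinset := by
    intro x hx
    have hroot := (Polynomial.mem_roots'.1 (Multiset.mem_toFinset.1 hx)).2
    apply Multiset.mem_toFinset.2
    apply Polynomial.mem_roots'.2
    refine ⟨hwne, ?_⟩
    rw [hw, Polynomial.IsRoot, Polynomial.eval_mul]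
    rw [Polynomial.IsRoot] at hroot
    rw [hroot, mul_zero]
  have hfin := descartes_ge R c w hwR hwne hwdeg
  by_cases he0 : e = 0
  · rw [if_pos he0]
    have := Finset.card_le_card hQsubw
    omega
  · rw [if_neg he0]
    have h0w : (0:ℝ) ∈ w.roots.toFinset := by
      apply Multiset.mem_toFinset.2
      apply Polynomial.mem_roots'.2
      refine ⟨hwne, ?_⟩
      rw [hw, Polynomial.IsRoot, Polynomial.eval_mul, Polynomial.eval_pow,
        Polynomial.eval_X, zero_pow (by omega : e ≠ 0), zero_mul]
    have h0Q : (0:ℝ) ∉ Q.roots.toFinset := by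
      intro h0
      exact hQ0 (Polynomial.mem_roots'.1 (Multiset.mem_toFinset.1 h0)).2
    have hsub : insert (0:ℝ) Q.roots.toFinset ⊆ w.roots.toFinset :=
      Finset.insert_subset h0w hQsubw
    have := Finset.card_le_card hsub
    rw [Finset.card_insert_of_notMem h0Q] at this
    omega

lemma dropWhile_head?_ge (c : ℕ) : ∀ (L : List ℕ) (x : ℕ),
    (L.dropWhile (fun y => decide (y < c))).head? = some x → c ≤ x := by
  intro L
  induction L with
  | nil => intro x hx; simp at hx
  | cons a t ih =>
    intro x hx
    by_cases ha : a < c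
    · rw [List.dropWhile_cons_of_pos (by simpa using ha)] at hx
      exact ih x hx
    · rw [List.dropWhile_cons_of_neg (by simpa using ha)] at hx
      simp at hx
      omega



end UBZN

open UBZN

/-- For `R = ℝ[t^{d₁},…,t^{d_r}]` with `gcd = 1`, conductor `c` and `k ≥ c`: a
nonzero polynomial `f ∈ R_{≤2k}` that is nonnegative on `ℝ` has at most
`k - ⌈(c - D_c - 1)/2⌉` distinct real zeros. -/
theorem upper_bound_zeros_nonneg (r : ℕ) (dv : Fin r → ℕ)
    (hgcd : Finset.univ.gcd dv = 1)
    (R : Subalgebra ℝ ℝ[X])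
    (hR : R = Algebra.adjoin ℝ (Set.range fun i => (X : ℝ[X]) ^ dv i))
    (c : ℕ)
    (hc : IsLeast {c : ℕ | ∀ m : ℕ, c ≤ m → (X : ℝ[X]) ^ m ∈ R} c)
    (k : ℕ) (hk : c ≤ k)
    (f : ℝ[X]) (hfR : f ∈ R) (hf0 : f ≠ 0) (hdeg : f.natDegree ≤ 2 * k)
    (hpos : ∀ x : ℝ, 0 ≤ f.eval x) :
    (f.roots.toFinset.card : ℤ) ≤
      (k : ℤ) - ⌈((c : ℚ) - (descartesNumber R c : ℚ) - 1) / 2⌉ := by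
  have key : 2 * f.roots.toFinset.card + c ≤ 2 * k + descartesNumber R c + 1 := by
    by_cases hN0 : f.roots.toFinset.card = 0
    · omega
    have hmain := main_count f hf0 hpos
    set z : ℕ := if f.eval 0 = 0 then 1 else 0 with hz
    have hz2 : (if f.eval 0 = 0 then 2 else 0) = 2 * z := by
      rw [hz]; split <;> rfl
    rw [hz2] at hmain
    have hz1 : z ≤ 1 := by rw [hz]; split <;> omega
    have hLne : SL f ≠ [] := SL_ne_nil hf0
    have hLsort := SL_sorted f
    have hheadL : (SL f).head? = some f.natTrailingDegree := SL_head? hf0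
    have hz_head : z = (if f.natTrailingDegree = 0 then 0 else 1) := by
      rw [hz]
      by_cases hev : f.eval 0 = 0
      · rw [if_pos hev, if_neg ?_]
        intro h0
        rcases Polynomial.natTrailingDegree_eq_zero.1 h0 with h | h
        · exact hf0 h
        · rw [Polynomial.coeff_zero_eq_eval_zero] at h
          exact h hev
      · rw [if_neg hev, if_pos ?_]
        apply Polynomial.natTrailingDegree_eq_zero.2
        right
        rwa [Polynomial.coeff_zero_eq_eval_zero]
    have hsupp : ∀ m ∈ SL f, (X : ℝ[X]) ^ m ∈ R :=
      fun m hm => supp_char R r dv hR f hfR m (mem_SL.1 hm)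
    have hsuppdeg : ∀ m ∈ SL f, m ≤ f.natDegree :=
      fun m hm => Polynomial.le_natDegree_of_mem_supp m (mem_SL.1 hm)
    have hcmem : (X : ℝ[X]) ^ c ∈ R := hc.1 c le_rfl
    set L₁ : List ℕ := (SL f).takeWhile (fun x => decide (x < c)) with hL₁
    set L₂ : List ℕ := (SL f).dropWhile (fun x => decide (x < c)) with hL₂
    have hsplit : L₁ ++ L₂ = SL f := List.takeWhile_append_dropWhile
    have hL₁lt : ∀ x ∈ L₁, x < c := by
      intro x hx
      rw [hL₁] at hx
      exact of_decide_eq_true (List.mem_takeWhile_imp (p := fun y => decide (y < c)) hx)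
    have hL₁sub : ∀ x ∈ L₁, x ∈ SL f := fun x hx => by
      rw [← hsplit]; exact List.mem_append_left _ hx
    have hL₂sub : ∀ x ∈ L₂, x ∈ SL f := fun x hx => by
      rw [← hsplit]; exact List.mem_append_right _ hx
    have hL₁sort : L₁.Pairwise (· < ·) :=
      List.Pairwise.sublist (hL₁ ▸ List.takeWhile_sublist _) hLsort
    have hL₂sort : L₂.Pairwise (· < ·) :=
      List.Pairwise.sublist (hL₂ ▸ List.dropWhile_sublist _) hLsort
    rcases hL₂e : L₂ with _ | ⟨e', t₂⟩
    · -- no exponents ≥ c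
      have hLL : SL f = L₁ := by rw [← hsplit, hL₂e, List.append_nil]
      have hL₁ne : L₁ ≠ [] := by rw [← hLL]; exact hLne
      set et := L₁.getLast hL₁ne with het
      have hetc : et < c := hL₁lt _ (List.getLast_mem _)
      have hCsort : (L₁ ++ [c]).Pairwise (· < ·) := by
        rw [List.pairwise_append]
        refine ⟨hL₁sort, by simp, ?_⟩
        intro x hx y hy
        simp only [List.mem_singleton] at hy
        subst hy
        exact hL₁lt x hx
      have hCne : L₁ ++ [c] ≠ [] := by simp
      have hwit := descartes_lower R c (L₁ ++ [c]) hCsort hCne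
        (fun m hm => by
          rcases List.mem_append.1 hm with h | h
          · exact hsupp m (hL₁sub m h)
          · simp only [List.mem_singleton] at h; subst h; exact hcmem)
        (fun m hm => by
          rcases List.mem_append.1 hm with h | h
          · exact le_of_lt (hL₁lt m h)
          · simp only [List.mem_singleton] at h; omega)
      have hWlC : Wl (L₁ ++ [c]) = Wl L₁ + wgap (c - et) := by
        rw [Wl_append L₁ [c] hL₁ne (by simp)]
        simp [het]
      -- head of the chain
      rcases hL₁e : L₁ with _ | ⟨a₁, t₁⟩
      · exact absurd hL₁e hL₁ne
      have hheadC : ((L₁ ++ [c]).head hCne) = a₁ := by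
        have h1 : (L₁ ++ [c]).head? = some a₁ := by rw [hL₁e]; rfl
        have h2 := List.head?_eq_head hCne
        rw [h1] at h2
        exact (Option.some_inj.1 h2).symm
      have ha₁ : a₁ = f.natTrailingDegree := by
        have h1 : (SL f).head? = some a₁ := by rw [hLL, hL₁e]; rfl
        rw [h1] at hheadL
        exact Option.some_inj.1 hheadL
      rw [hheadC] at hwit
      have hzz : (if a₁ = 0 then 0 else 1) = z := by rw [hz_head, ha₁]
      rw [hzz, hWlC] at hwit
      have hg := wgap_pos (c - et)
      rw [hLL] at hmain
      omega
    · -- L₂ nonempty, with head e' ≥ c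
      have hL₂ne : L₂ ≠ [] := by rw [hL₂e]; simp
      have hL₂head? : L₂.head? = some e' := by rw [hL₂e]; rfl
      have he'c : c ≤ e' := by
        apply dropWhile_head?_ge c (SL f)
        rw [← hL₂]
        exact hL₂head?
      have hL₂head : L₂.head hL₂ne = e' := by
        have h2 := List.head?_eq_head hL₂ne
        rw [hL₂head?] at h2
        exact (Option.some_inj.1 h2).symm
      have hspan₂ : Wl L₂ + e' ≤ f.natDegree := by
        have h1 := Wl_le_span L₂ hL₂ne hL₂sort
        rw [hL₂head] at h1
        have h2 : L₂.getLast hL₂ne ≤ f.natDegree :=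
          hsuppdeg _ (hL₂sub _ (List.getLast_mem _))
        omega
      rcases hL₁e : L₁ with _ | ⟨a₁, t₁⟩
      · -- all exponents ≥ c
        have hLL : SL f = L₂ := by rw [← hsplit, hL₁e, List.nil_append]
        have hheadz : f.natTrailingDegree = e' := by
          have h1 : (SL f).head? = some e' := by rw [hLL]; exact hL₂head?
          rw [h1] at hheadL
          exact (Option.some_inj.1 hheadL).symm
        rw [hLL] at hmain
        by_cases hc0 : c = 0
        · -- degenerate case
          by_cases hev : f.natTrailingDegree = 0
          · have hzz : z = 0 := by rw [hz_head, if_pos hev]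
            omega
          · have hzz : z = 1 := by rw [hz_head, if_neg hev]
            have he'1 : 1 ≤ e' := by omega
            omega
        · -- witness [0, c] gives D ≥ 1
          have hwit := descartes_lower R c [0, c] (by
              rw [List.pairwise_cons]
              constructor
              · intro y hy
                simp only [List.mem_singleton] at hy
                subst hy
                omega
              · simp) (by simp)
            (fun m hm => by
              rcases List.mem_cons.1 hm with rfl | hm'
              · rw [pow_zero]; exact one_mem R
              · simp only [List.mem_singleton] at hm'
                subst hm'
                exact hcmem)
            (fun m hm => by
              rcases List.mem_cons.1 hm with rfl | hm'
              · omega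
              · simp only [List.mem_singleton] at hm'
                omega)
          simp at hwit
          have hWl0c : Wl [0, c] = wgap c := by
            rw [Wl_cons, Wl_single, Nat.sub_zero]
            omega
          rw [hWl0c] at hwit
          have hg := wgap_pos c
          omega
      · -- both parts nonempty
        have hL₁ne : L₁ ≠ [] := by rw [hL₁e]; simp
        set et := L₁.getLast hL₁ne with het
        have hetc : et < c := hL₁lt _ (List.getLast_mem _)
        have hWlsplit : Wl (SL f) = Wl L₁ + wgap (e' - et) + Wl L₂ := by
          conv_lhs => rw [← hsplit]
          rw [Wl_append L₁ L₂ hL₁ne hL₂ne, hL₂head, het]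
        have hCsort : (L₁ ++ [c]).Pairwise (· < ·) := by
          rw [List.pairwise_append]
          refine ⟨hL₁sort, by simp, ?_⟩
          intro x hx y hy
          simp only [List.mem_singleton] at hy
          subst hy
          exact hL₁lt x hx
        have hCne : L₁ ++ [c] ≠ [] := by simp
        have hwit := descartes_lower R c (L₁ ++ [c]) hCsort hCne
          (fun m hm => by
            rcases List.mem_append.1 hm with h | h
            · exact hsupp m (hL₁sub m h)
            · simp only [List.mem_singleton] at h; subst h; exact hcmem)
          (fun m hm => by
            rcases List.mem_append.1 hm with h | h
            · exact le_of_lt (hL₁lt m h)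
            · simp only [List.mem_singleton] at h; omega)
        have hWlC : Wl (L₁ ++ [c]) = Wl L₁ + wgap (c - et) := by
          rw [Wl_append L₁ [c] hL₁ne (by simp)]
          simp [het]
        have hheadC : ((L₁ ++ [c]).head hCne) = a₁ := by
          have h1 : (L₁ ++ [c]).head? = some a₁ := by rw [hL₁e]; rfl
          have h2 := List.head?_eq_head hCne
          rw [h1] at h2
          exact (Option.some_inj.1 h2).symm
        have ha₁ : a₁ = f.natTrailingDegree := by
          have h1 : (SL f).head? = some a₁ := by rw [← hsplit, hL₁e]; rfl
          rw [h1] at hheadL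
          exact Option.some_inj.1 hheadL
        rw [hheadC] at hwit
        have hzz : (if a₁ = 0 then 0 else 1) = z := by rw [hz_head, ha₁]
        rw [hzz, hWlC] at hwit
        rw [hWlsplit] at hmain
        by_cases hee : e' = c
        · subst hee
          omega
        · have h1 := wgap_le_two (e' - et)
          have h2 := wgap_pos (c - et)
          omega
  -- conclude via ceiling arithmetic
  have hceil : ⌈((c : ℚ) - (descartesNumber R c : ℚ) - 1) / 2⌉ ≤
      (k : ℤ) - (f.roots.toFinset.card : ℤ) := by
    rw [Int.ceil_le]
    push_cast
    rw [div_le_iff₀ (by norm_num : (0:ℚ) < 2)]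
    have keyQ : (2 * (f.roots.toFinset.card : ℚ) + c) ≤ 2 * k + (descartesNumber R c : ℚ) + 1 := by
      exact_mod_cast key
    linarith
  linarith
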